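/- arXiv:2002.03993 — 4 statements merged into one kernel-verified Lean document; each statement's English description precedes it below -/
import Mathlib

section
/- Assume there exists θ > 0 such that ∑_{k≥1} P(k)·e^{θ·k} < ∞. Then for every fixed x ≥ 0, every complex number β ≠ 0 with L(β,x) = 0 is real; i.e., all zeros of the function β ↦ L(β,x) on ℂ \ {0} lie on the real axis. -/
open MeasureTheory Real Set Filter Topology

/-- `g₂(x) = e^{-x} ∑_{k≥2} P(k) x^{k-2}/(k-2)!`. -/
noncomputable def g2 (P : ℕ → ℝ) (x : ℝ) : ℝ :=
  Real.exp (-x) * ∑' k : ℕ, P (k + 2) * x ^ k / (Nat.factorial k : ℝ)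

section helpers

/-- Continuity of the g2 series. -/
lemma g2_cont (P : ℕ → ℝ) (hP : ∀ k, 0 ≤ P k) (hPb : ∀ k, P k ≤ 1) :
    Continuous (g2 P) := by
  have hF : Continuous fun x : ℝ => ∑' k : ℕ, P (k + 2) * x ^ k / (Nat.factorial k : ℝ) := by
    rw [continuous_iff_continuousAt]
    intro x
    set R : ℝ := |x| + 1 with hR
    have hRpos : 0 < R := by positivity
    have hcont : ContinuousOn (fun y : ℝ => ∑' k : ℕ, P (k + 2) * y ^ k / (Nat.factorial k : ℝ))
        (Metric.ball 0 R) := by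
      refine continuousOn_tsum (fun k => ?_) (Real.summable_pow_div_factorial R)
        (fun k y hy => ?_)
      · exact ((continuous_const.mul (continuous_pow k)).div_const _).continuousOn
      · have hyR : |y| ≤ R := by
          have := mem_ball_zero_iff.1 hy
          simpa [Real.norm_eq_abs] using this.le
        have h1 : |P (k + 2) * y ^ k / (Nat.factorial k : ℝ)|
            = P (k + 2) * |y| ^ k / (Nat.factorial k : ℝ) := by
          rw [abs_div, abs_mul, abs_pow, abs_of_nonneg (hP _), Nat.abs_cast]
        rw [Real.norm_eq_abs, h1]
        have h2 : P (k + 2) * |y| ^ k ≤ R ^ k := by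
          calc P (k + 2) * |y| ^ k ≤ 1 * |y| ^ k := by
                apply mul_le_mul_of_nonneg_right (hPb _) (by positivity)
            _ = |y| ^ k := one_mul _
            _ ≤ R ^ k := pow_le_pow_left₀ (abs_nonneg _) hyR k
        exact div_le_div_of_nonneg_right h2 (by positivity)
    have hx : x ∈ Metric.ball (0:ℝ) R := by
      rw [Metric.mem_ball, dist_zero_right, Real.norm_eq_abs]
      linarith
    exact hcont.continuousAt (Metric.isOpen_ball.mem_nhds hx)
  exact (Real.continuous_exp.comp continuous_neg).mul hF

end helpers

lemma g2_summable (P : ℕ → ℝ) (hP : ∀ k, 0 ≤ P k) (hPb : ∀ k, P k ≤ 1) (z : ℝ) :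
    Summable (fun k : ℕ => P (k + 2) * z ^ k / (Nat.factorial k : ℝ)) := by
  refine Summable.of_norm ?_
  refine Summable.of_nonneg_of_le (fun k => norm_nonneg _) (fun k => ?_)
    (Real.summable_pow_div_factorial |z|)
  rw [Real.norm_eq_abs, abs_div, abs_mul, abs_pow, abs_of_nonneg (hP _), Nat.abs_cast]
  apply div_le_div_of_nonneg_right _ (by positivity)
  calc P (k + 2) * |z| ^ k ≤ 1 * |z| ^ k :=
        mul_le_mul_of_nonneg_right (hPb _) (by positivity)
    _ = |z| ^ k := one_mul _

lemma g2_nonneg (P : ℕ → ℝ) (hP : ∀ k, 0 ≤ P k) {z : ℝ} (hz : 0 ≤ z) : 0 ≤ g2 P z := by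
  unfold g2
  apply mul_nonneg (Real.exp_pos _).le
  exact tsum_nonneg fun k =>
    div_nonneg (mul_nonneg (hP _) (pow_nonneg hz _)) (Nat.cast_nonneg _)

lemma g2_decay (P : ℕ → ℝ) {θ : ℝ} (hθ : 0 < θ) (hP : ∀ k, 0 ≤ P k) (hPb : ∀ k, P k ≤ 1)
    (hMθ : Summable fun k : ℕ => P k * Real.exp (θ * k)) :
    ∃ C ε : ℝ, 0 < C ∧ 0 < ε ∧ ε ≤ 1 ∧ ∀ z, 0 ≤ z → g2 P z ≤ C * Real.exp (-ε * z) := by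
  set θ' : ℝ := min θ 1 with hθ'def
  have hθ'pos : 0 < θ' := lt_min hθ one_pos
  have hθ'leθ : θ' ≤ θ := min_le_left _ _
  set s : ℝ := Real.exp (-θ') with hsdef
  have hspos : 0 < s := Real.exp_pos _
  have hslt : s < 1 := Real.exp_lt_one_iff.2 (by linarith)
  have hshift : Summable fun k : ℕ => P (k + 2) * Real.exp (θ * (k + 2 : ℕ)) := by
    exact (summable_nat_add_iff 2).2 hMθ
  have hCsum : Summable fun k : ℕ => P (k + 2) * Real.exp (θ' * k) := by
    refine Summable.of_nonneg_of_le
      (fun k => mul_nonneg (hP _) (Real.exp_pos _).le) (fun k => ?_) hshift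
    apply mul_le_mul_of_nonneg_left _ (hP _)
    apply Real.exp_le_exp.2
    have : (0:ℝ) ≤ (k:ℝ) := Nat.cast_nonneg k
    have h2 : ((k + 2 : ℕ) : ℝ) = (k : ℝ) + 2 := by push_cast; ring
    rw [h2]
    nlinarith
  set C : ℝ := ∑' k : ℕ, P (k + 2) * Real.exp (θ' * k) with hCdef
  have hC0 : 0 ≤ C := tsum_nonneg fun k => mul_nonneg (hP _) (Real.exp_pos _).le
  refine ⟨C + 1, 1 - s, by linarith, by linarith, by linarith, fun z hz => ?_⟩
  have hterm : ∀ k : ℕ, P (k + 2) * z ^ k / (Nat.factorial k : ℝ)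
      ≤ P (k + 2) * Real.exp (θ' * k) * Real.exp (s * z) := by
    intro k
    have hzk : z ^ k / (Nat.factorial k : ℝ) ≤ Real.exp (s * z) * Real.exp (θ' * k) := by
      have h1 : (s * z) ^ k / (Nat.factorial k : ℝ) ≤ Real.exp (s * z) :=
        Real.pow_div_factorial_le_exp (s * z) (mul_nonneg hspos.le hz) k
      have h2 : (s * z) ^ k = s ^ k * z ^ k := mul_pow s z k
      have h3 : Real.exp (θ' * k) = (s ^ k)⁻¹ := by
        rw [hsdef, ← Real.exp_nat_mul, ← Real.exp_neg]
        congr 1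
        ring
      rw [h3]
      rw [h2, mul_div_assoc] at h1
      have h4 := (le_div_iff₀' (pow_pos hspos k)).2 h1
      simpa [div_eq_mul_inv] using h4
    calc P (k + 2) * z ^ k / (Nat.factorial k : ℝ)
        = P (k + 2) * (z ^ k / (Nat.factorial k : ℝ)) := by ring
      _ ≤ P (k + 2) * (Real.exp (s * z) * Real.exp (θ' * k)) :=
          mul_le_mul_of_nonneg_left hzk (hP _)
      _ = P (k + 2) * Real.exp (θ' * k) * Real.exp (s * z) := by ring
  have hsum1 := g2_summable P hP hPb z
  have hsum2 : Summable fun k : ℕ => P (k + 2) * Real.exp (θ' * k) * Real.exp (s * z) :=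
    hCsum.mul_right _
  have htsum : (∑' k : ℕ, P (k + 2) * z ^ k / (Nat.factorial k : ℝ))
      ≤ C * Real.exp (s * z) := by
    calc (∑' k : ℕ, P (k + 2) * z ^ k / (Nat.factorial k : ℝ))
        ≤ ∑' k : ℕ, P (k + 2) * Real.exp (θ' * k) * Real.exp (s * z) :=
          Summable.tsum_le_tsum hterm hsum1 hsum2
      _ = C * Real.exp (s * z) := by rw [hCdef, tsum_mul_right]
  unfold g2
  calc Real.exp (-z) * ∑' k : ℕ, P (k + 2) * z ^ k / (Nat.factorial k : ℝ)
      ≤ Real.exp (-z) * (C * Real.exp (s * z)) :=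
        mul_le_mul_of_nonneg_left htsum (Real.exp_pos _).le
    _ = C * Real.exp (-(1 - s) * z) := by
        rw [show -(1 - s) * z = s * z + -z by ring, Real.exp_add]; ring
    _ ≤ (C + 1) * Real.exp (-(1 - s) * z) := by
        apply mul_le_mul_of_nonneg_right (by linarith) (Real.exp_pos _).le

lemma integral_exp_neg_mul_Ioi {δ : ℝ} (hδ : 0 < δ) (a : ℝ) :
    (∫ t in Ioi a, Real.exp (-δ * t)) = Real.exp (-δ * a) / δ := by
  have hderiv : ∀ t ∈ Ici a, HasDerivAt (fun y => -Real.exp (-δ * y) / δ)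
      (Real.exp (-δ * t)) t := by
    intro t _
    have h1 : HasDerivAt (fun y : ℝ => -δ * y) (-δ) t := by
      simpa using (hasDerivAt_id t).const_mul (-δ)
    have h2 : HasDerivAt (fun y => -Real.exp (-δ * y) / δ) (-(Real.exp (-δ * t) * -δ) / δ) t :=
      (h1.exp.neg).div_const δ
    convert h2 using 1
    rw [eq_div_iff hδ.ne']; ring
  have htend : Tendsto (fun y => -Real.exp (-δ * y) / δ) atTop (𝓝 0) := by
    have : Tendsto (fun y => -Real.exp (-δ * y) / δ) atTop (𝓝 (-0 / δ)) := by
      refine Tendsto.div_const (Tendsto.neg ?_) _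
      exact Real.tendsto_exp_atBot.comp (tendsto_id.const_mul_atTop_of_neg (by linarith))
    simpa using this
  have h := integral_Ioi_of_hasDerivAt_of_tendsto' hderiv
    (exp_neg_integrableOn_Ioi a hδ) htend
  rw [h]; ring

/-- Tail-integral facts for a function continuous and integrable on the right half-line. -/
lemma tail_facts (f : ℝ → ℝ) (hc : ContinuousOn f (Ici 0)) (hi : IntegrableOn f (Ioi 0)) :
    (∀ z, 0 ≤ z → IntegrableOn f (Ioi z)) ∧
    (∀ z, 0 ≤ z → (∫ t in Ioi z, f t) = (∫ t in Ioi 0, f t) - ∫ t in (0:ℝ)..z, f t) ∧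
    ContinuousOn (fun z => ∫ t in Ioi z, f t) (Ici 0) ∧
    (∀ z, 0 < z → HasDerivAt (fun y => ∫ t in Ioi y, f t) (-f z) z) := by
  have hmono : ∀ z, 0 ≤ z → IntegrableOn f (Ioi z) := fun z hz =>
    hi.mono_set (Ioi_subset_Ioi hz)
  have hsplit : ∀ z, 0 ≤ z →
      (∫ t in Ioi z, f t) = (∫ t in Ioi 0, f t) - ∫ t in (0:ℝ)..z, f t := by
    intro z hz
    have h1 : Ioc 0 z ∪ Ioi z = Ioi (0:ℝ) := Ioc_union_Ioi_eq_Ioi hz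
    have h2 := setIntegral_union (μ := volume) (f := f) Ioc_disjoint_Ioi_same
      measurableSet_Ioi (hi.mono_set (h1 ▸ subset_union_left)) (hmono z hz)
    rw [h1] at h2
    rw [intervalIntegral.integral_of_le hz]
    linarith
  have hii : ∀ z, 0 ≤ z → IntervalIntegrable f volume 0 z := by
    intro z hz
    rw [intervalIntegrable_iff_integrableOn_Ioc_of_le hz]
    exact hi.mono_set Ioc_subset_Ioi_self
  have hprimderiv : ∀ z, 0 < z →
      HasDerivAt (fun y => ∫ t in (0:ℝ)..y, f t) (f z) z := by
    intro z hz
    refine intervalIntegral.integral_hasDerivAt_right (hii z hz.le) ?_ ?_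
    · exact (hc.mono (Ioi_subset_Ici le_rfl)).stronglyMeasurableAtFilter isOpen_Ioi z hz
    · exact hc.continuousAt (mem_of_superset (Ioi_mem_nhds hz) Ioi_subset_Ici_self)
  have hprim : ContinuousOn (fun z => ∫ t in (0:ℝ)..z, f t) (Ici 0) := by
    intro z hz
    rcases eq_or_lt_of_le (mem_Ici.1 hz : (0:ℝ) ≤ z) with rfl | hz'
    · have hint : IntegrableOn f (Icc 0 1) := by
        rw [integrableOn_Icc_iff_integrableOn_Ioc]
        exact hi.mono_set Ioc_subset_Ioi_self
      have h := intervalIntegral.continuousOn_primitive (μ := volume) hint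
      have h0 := h 0 ⟨le_rfl, zero_le_one⟩
      have h0' : ContinuousWithinAt (fun x => ∫ t in Ioc 0 x, f t) (Ici 0) 0 := by
        rwa [ContinuousWithinAt, nhdsWithin_Icc_eq_nhdsGE zero_lt_one] at h0
      refine h0'.congr (fun y hy => ?_) ?_
      · rw [intervalIntegral.integral_of_le hy]
      · simp
    · exact ((hprimderiv z hz').continuousAt).continuousWithinAt
  refine ⟨hmono, hsplit, ?_, ?_⟩
  · exact (continuousOn_const.sub hprim).congr hsplit
  · intro z hz
    have hd := ((hprimderiv z hz).const_sub (∫ t in Ioi 0, f t))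
    apply hd.congr_of_eventuallyEq
    filter_upwards [Ioi_mem_nhds hz] with y hy using hsplit y hy.le

lemma tail_nonneg (f : ℝ → ℝ) (hf : ∀ t, 0 ≤ t → 0 ≤ f t) {z : ℝ} (hz : 0 ≤ z) :
    0 ≤ ∫ t in Ioi z, f t :=
  setIntegral_nonneg measurableSet_Ioi fun t ht => hf t (hz.trans (le_of_lt ht))

lemma tail_anti (f : ℝ → ℝ) (hf : ∀ t, 0 ≤ t → 0 ≤ f t)
    (hi : IntegrableOn f (Ioi 0)) {z₁ z₂ : ℝ} (hz₁ : 0 ≤ z₁) (h12 : z₁ ≤ z₂) :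
    (∫ t in Ioi z₂, f t) ≤ ∫ t in Ioi z₁, f t := by
  refine setIntegral_mono_set (hi.mono_set (Ioi_subset_Ioi hz₁)) ?_ ?_
  · refine (ae_restrict_iff' measurableSet_Ioi).2 (ae_of_all _ fun t ht => ?_)
    exact hf t (hz₁.trans (le_of_lt ht))
  · exact HasSubset.Subset.eventuallyLE (Ioi_subset_Ioi h12)

/-- `G_0(x) = 1`, `G_{i+1}(x) = ∫_x^∞ ∫_y^∞ g₂(z) G_i(z) dz dy`. -/
noncomputable def Gfun (P : ℕ → ℝ) : ℕ → ℝ → ℝ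
  | 0 => fun _ => 1
  | (i + 1) => fun x => ∫ y in Ioi x, ∫ z in Ioi y, g2 P z * Gfun P i z

noncomputable def Qf (P : ℕ → ℝ) (z : ℝ) : ℝ := ∫ t in Ioi z, g2 P t
noncomputable def Af (P : ℕ → ℝ) (z : ℝ) : ℝ := ∫ t in Ioi z, t * g2 P t
noncomputable def Hf (P : ℕ → ℝ) (z : ℝ) : ℝ := Af P z - z * Qf P z
noncomputable def Ff (P : ℕ → ℝ) (i : ℕ) (z : ℝ) : ℝ := ∫ t in Ioi z, g2 P t * Gfun P i t

lemma integrableOn_of_decay {f : ℝ → ℝ} {K δ : ℝ} (hδ : 0 < δ)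
    (hm : AEStronglyMeasurable f (volume.restrict (Ioi 0)))
    (hb : ∀ t, 0 ≤ t → |f t| ≤ K * Real.exp (-δ * t)) : IntegrableOn f (Ioi 0) := by
  refine Integrable.mono ((exp_neg_integrableOn_Ioi 0 hδ).const_mul K) hm ?_
  refine (ae_restrict_iff' measurableSet_Ioi).2 (ae_of_all _ fun t ht => ?_)
  rw [Real.norm_eq_abs, Real.norm_eq_abs]
  exact (hb t (le_of_lt ht)).trans (le_abs_self _)

structure Aux (P : ℕ → ℝ) (C ε : ℝ) : Prop where
  g2c : Continuous (g2 P)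
  g2nn : ∀ z, 0 ≤ z → 0 ≤ g2 P z
  hC : 0 < C
  hε : 0 < ε
  dec : ∀ z, 0 ≤ z → g2 P z ≤ C * Real.exp (-ε * z)
  q1 : IntegrableOn (g2 P) (Ioi 0)
  q2 : ContinuousOn (Qf P) (Ici 0)
  q3 : ∀ z, 0 < z → HasDerivAt (Qf P) (-(g2 P z)) z
  q4 : ∀ z, 0 ≤ z → 0 ≤ Qf P z ∧ Qf P z ≤ C / ε * Real.exp (-ε * z)
  q5 : ∀ z₁ z₂, 0 ≤ z₁ → z₁ ≤ z₂ → Qf P z₂ ≤ Qf P z₁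
  h2 : ContinuousOn (Hf P) (Ici 0)
  h3 : ∀ z, 0 < z → HasDerivAt (Hf P) (-(Qf P z)) z
  h4 : ∀ z, 0 ≤ z → 0 ≤ Hf P z ∧ Hf P z ≤ 4 * C / ε ^ 2 * Real.exp (-(ε / 2) * z)
  h5 : ∀ z₁ z₂, 0 ≤ z₁ → z₁ ≤ z₂ → Hf P z₂ ≤ Hf P z₁
  h6 : Tendsto (Hf P) atTop (𝓝 0)
  q6 : Tendsto (Qf P) atTop (𝓝 0)

lemma aux_of (P : ℕ → ℝ) (C ε : ℝ) (hg2c : Continuous (g2 P))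
    (hg2nn : ∀ z, 0 ≤ z → 0 ≤ g2 P z) (hC : 0 < C) (hε : 0 < ε) (hε1 : ε ≤ 1)
    (hdec : ∀ z, 0 ≤ z → g2 P z ≤ C * Real.exp (-ε * z)) : Aux P C ε := by
  have hεhalf : 0 < ε / 2 := by linarith
  -- integrability of g2
  have q1 : IntegrableOn (g2 P) (Ioi 0) := by
    refine integrableOn_of_decay (K := C) hε (hg2c.aestronglyMeasurable.restrict) (fun t ht => ?_)
    rw [abs_of_nonneg (hg2nn t ht)]; exact hdec t ht
  -- t * g2 bound
  have htb : ∀ t : ℝ, 0 ≤ t → t * g2 P t ≤ 2 * C / ε * Real.exp (-(ε / 2) * t) := by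
    intro t ht
    have h1 : t ≤ 2 / ε * Real.exp (ε / 2 * t) := by
      have h := Real.add_one_le_exp (ε / 2 * t)
      have h2 : ε / 2 * t ≤ Real.exp (ε / 2 * t) := by linarith
      calc t = 2 / ε * (ε / 2 * t) := by field_simp
        _ ≤ 2 / ε * Real.exp (ε / 2 * t) :=
            mul_le_mul_of_nonneg_left h2 (by positivity)
    calc t * g2 P t ≤ (2 / ε * Real.exp (ε / 2 * t)) * (C * Real.exp (-ε * t)) := by
          apply mul_le_mul h1 (hdec t ht) (hg2nn t ht)
          positivity
      _ = 2 * C / ε * Real.exp (-(ε / 2) * t) := by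
          rw [show (2 / ε * Real.exp (ε / 2 * t)) * (C * Real.exp (-ε * t))
              = 2 * C / ε * (Real.exp (ε / 2 * t) * Real.exp (-ε * t)) by ring,
            ← Real.exp_add]
          congr 2
          ring
  have htnn : ∀ t : ℝ, 0 ≤ t → 0 ≤ t * g2 P t := fun t ht => mul_nonneg ht (hg2nn t ht)
  have ha1 : IntegrableOn (fun t => t * g2 P t) (Ioi 0) := by
    refine integrableOn_of_decay (K := 2 * C / ε) hεhalf ((continuous_id.mul hg2c).aestronglyMeasurable.restrict)
      (fun t ht => ?_)
    rw [abs_of_nonneg (htnn t ht)]; exact htb t ht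
  obtain ⟨q1', qsplit, q2, q3'⟩ := tail_facts (g2 P) hg2c.continuousOn q1
  obtain ⟨a1', asplit, a2, a3'⟩ := tail_facts (fun t => t * g2 P t)
    (continuous_id.mul hg2c).continuousOn ha1
  have q3 : ∀ z, 0 < z → HasDerivAt (Qf P) (-(g2 P z)) z := q3'
  have q4 : ∀ z, 0 ≤ z → 0 ≤ Qf P z ∧ Qf P z ≤ C / ε * Real.exp (-ε * z) := by
    intro z hz
    constructor
    · exact tail_nonneg _ hg2nn hz
    · have h := setIntegral_mono_on (q1' z hz)
        (MeasureTheory.IntegrableOn.mono_set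
          ((exp_neg_integrableOn_Ioi 0 hε).const_mul C) (Ioi_subset_Ioi hz))
        measurableSet_Ioi (fun t ht => hdec t (hz.trans (le_of_lt ht)))
      calc Qf P z ≤ ∫ t in Ioi z, C * Real.exp (-ε * t) := h
        _ = C * (Real.exp (-ε * z) / ε) := by
            rw [MeasureTheory.integral_const_mul, integral_exp_neg_mul_Ioi hε]
        _ = C / ε * Real.exp (-ε * z) := by ring
  have q5 : ∀ z₁ z₂, 0 ≤ z₁ → z₁ ≤ z₂ → Qf P z₂ ≤ Qf P z₁ :=
    fun z₁ z₂ h1 h2 => tail_anti _ hg2nn q1 h1 h2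
  have habound : ∀ z, 0 ≤ z → Af P z ≤ 4 * C / ε ^ 2 * Real.exp (-(ε / 2) * z) := by
    intro z hz
    have h := setIntegral_mono_on (a1' z hz)
      (MeasureTheory.IntegrableOn.mono_set
        ((exp_neg_integrableOn_Ioi 0 hεhalf).const_mul (2 * C / ε)) (Ioi_subset_Ioi hz))
      measurableSet_Ioi (fun t ht => htb t (hz.trans (le_of_lt ht)))
    calc Af P z ≤ ∫ t in Ioi z, 2 * C / ε * Real.exp (-(ε / 2) * t) := h
      _ = 2 * C / ε * (Real.exp (-(ε / 2) * z) / (ε / 2)) := by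
          rw [MeasureTheory.integral_const_mul, integral_exp_neg_mul_Ioi hεhalf]
      _ = 4 * C / ε ^ 2 * Real.exp (-(ε / 2) * z) := by
          field_simp; ring
  -- representation of Hf
  have hrepr : ∀ z, 0 ≤ z → Hf P z = ∫ t in Ioi z, (t - z) * g2 P t := by
    intro z hz
    rw [Hf, Qf, Af]
    rw [show z * ∫ t in Ioi z, g2 P t = ∫ t in Ioi z, z * g2 P t from
      (MeasureTheory.integral_const_mul z _).symm]
    rw [← MeasureTheory.integral_sub (a1' z hz) ((q1' z hz).const_mul z)]
    congr 1
    ext t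
    ring
  have hHnn : ∀ z, 0 ≤ z → 0 ≤ Hf P z := by
    intro z hz
    rw [hrepr z hz]
    refine setIntegral_nonneg measurableSet_Ioi fun t ht => ?_
    have := le_of_lt (mem_Ioi.1 ht : z < t)
    exact mul_nonneg (by linarith) (hg2nn t (hz.trans this))
  have h4 : ∀ z, 0 ≤ z → 0 ≤ Hf P z ∧ Hf P z ≤ 4 * C / ε ^ 2 * Real.exp (-(ε / 2) * z) := by
    intro z hz
    refine ⟨hHnn z hz, ?_⟩
    have h1 : Hf P z ≤ Af P z := by
      rw [hrepr z hz, Af]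
      refine setIntegral_mono_on ?_ (a1' z hz) measurableSet_Ioi (fun t ht => ?_)
      · have : (fun t => (t - z) * g2 P t) = fun t => t * g2 P t - z * g2 P t := by
          ext t; ring
        rw [this]
        exact (a1' z hz).sub ((q1' z hz).const_mul z)
      · have h2 : 0 ≤ g2 P t := hg2nn t (hz.trans (le_of_lt ht))
        nlinarith [le_of_lt (mem_Ioi.1 ht : z < t)]
    exact h1.trans (habound z hz)
  have h5 : ∀ z₁ z₂, 0 ≤ z₁ → z₁ ≤ z₂ → Hf P z₂ ≤ Hf P z₁ := by
    intro z₁ z₂ h1 h12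
    have h2 : 0 ≤ z₂ := h1.trans h12
    rw [hrepr z₁ h1, hrepr z₂ h2]
    have hint1 : IntegrableOn (fun t => (t - z₁) * g2 P t) (Ioi z₁) := by
      have : (fun t => (t - z₁) * g2 P t) = fun t => t * g2 P t - z₁ * g2 P t := by
        ext t; ring
      rw [this]
      exact (a1' z₁ h1).sub ((q1' z₁ h1).const_mul z₁)
    calc (∫ t in Ioi z₂, (t - z₂) * g2 P t) ≤ ∫ t in Ioi z₂, (t - z₁) * g2 P t := by
          refine setIntegral_mono_on ?_ (hint1.mono_set (Ioi_subset_Ioi h12))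
            measurableSet_Ioi (fun t ht => ?_)
          · have : (fun t => (t - z₂) * g2 P t) = fun t => t * g2 P t - z₂ * g2 P t := by
              ext t; ring
            rw [this]
            exact (a1' z₂ h2).sub ((q1' z₂ h2).const_mul z₂)
          · have h3 : 0 ≤ g2 P t := hg2nn t (h2.trans (le_of_lt ht))
            nlinarith [le_of_lt (mem_Ioi.1 ht : z₂ < t)]
      _ ≤ ∫ t in Ioi z₁, (t - z₁) * g2 P t := by
          refine setIntegral_mono_set hint1 ?_ ?_
          · refine (ae_restrict_iff' measurableSet_Ioi).2 (ae_of_all _ fun t ht => ?_)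
            have := le_of_lt (mem_Ioi.1 ht : z₁ < t)
            exact mul_nonneg (by linarith) (hg2nn t (h1.trans this))
          · exact HasSubset.Subset.eventuallyLE (Ioi_subset_Ioi h12)
  have h6 : Tendsto (Hf P) atTop (𝓝 0) := by
    have hub : Tendsto (fun z => 4 * C / ε ^ 2 * Real.exp (-(ε / 2) * z)) atTop (𝓝 0) := by
      have : Tendsto (fun z : ℝ => Real.exp (-(ε / 2) * z)) atTop (𝓝 0) :=
        Real.tendsto_exp_atBot.comp (tendsto_id.const_mul_atTop_of_neg (by linarith))
      simpa using this.const_mul (4 * C / ε ^ 2)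
    refine tendsto_of_tendsto_of_tendsto_of_le_of_le' tendsto_const_nhds hub ?_ ?_
    · filter_upwards [eventually_ge_atTop (0:ℝ)] with z hz using hHnn z hz
    · filter_upwards [eventually_ge_atTop (0:ℝ)] with z hz using (h4 z hz).2
  have q6 : Tendsto (Qf P) atTop (𝓝 0) := by
    have hub : Tendsto (fun z => C / ε * Real.exp (-ε * z)) atTop (𝓝 0) := by
      have : Tendsto (fun z : ℝ => Real.exp (-ε * z)) atTop (𝓝 0) :=
        Real.tendsto_exp_atBot.comp (tendsto_id.const_mul_atTop_of_neg (by linarith))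
      simpa using this.const_mul (C / ε)
    refine tendsto_of_tendsto_of_tendsto_of_le_of_le' tendsto_const_nhds hub ?_ ?_
    · filter_upwards [eventually_ge_atTop (0:ℝ)] with z hz using (q4 z hz).1
    · filter_upwards [eventually_ge_atTop (0:ℝ)] with z hz using (q4 z hz).2
  have h3 : ∀ z, 0 < z → HasDerivAt (Hf P) (-(Qf P z)) z := by
    intro z hz
    show HasDerivAt (fun y => Af P y - y * Qf P y) (-(Qf P z)) z
    have hA : HasDerivAt (Af P) (-(z * g2 P z)) z := a3' z hz
    have hQ : HasDerivAt (Qf P) (-(g2 P z)) z := q3' z hz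
    have hzQ : HasDerivAt (fun y => y * Qf P y) (1 * Qf P z + z * -(g2 P z)) z :=
      (hasDerivAt_id z).mul hQ
    have : HasDerivAt (fun y => Af P y - y * Qf P y)
        (-(z * g2 P z) - (1 * Qf P z + z * -(g2 P z))) z := hA.sub hzQ
    convert this using 1
    ring
  have h2 : ContinuousOn (Hf P) (Ici 0) := by
    apply a2.sub
    exact (continuousOn_id.mul q2)
  exact ⟨hg2c, hg2nn, hC, hε, hdec, q1, q2, q3, q4, q5, h2, h3, h4, h5, h6, q6⟩

lemma step {P : ℕ → ℝ} {C ε : ℝ} (A : Aux P C ε) (i : ℕ)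
    (hGc : ContinuousOn (Gfun P i) (Ici 0))
    (hGb : ∀ z, 0 ≤ z → 0 ≤ Gfun P i z ∧
      Gfun P i z ≤ Hf P z ^ i / (Nat.factorial i : ℝ)) :
    ContinuousOn (Ff P i) (Ici 0) ∧
    (∀ z, 0 ≤ z → 0 ≤ Ff P i z ∧
      Ff P i z ≤ Qf P z * Hf P z ^ i / (Nat.factorial i : ℝ)) ∧
    (∀ z, 0 < z → HasDerivAt (Ff P i) (-(g2 P z * Gfun P i z)) z) ∧
    (∀ z, 0 < z → HasDerivAt (Gfun P (i + 1)) (-(Ff P i z)) z) ∧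
    ContinuousOn (Gfun P (i + 1)) (Ici 0) ∧
    (∀ z, 0 ≤ z → 0 ≤ Gfun P (i + 1) z ∧
      Gfun P (i + 1) z ≤ Hf P z ^ (i + 1) / (Nat.factorial (i + 1) : ℝ)) := by
  have hfacpos : (0:ℝ) < (Nat.factorial i : ℝ) := by
    exact_mod_cast Nat.factorial_pos i
  have hH0 : 0 ≤ Hf P 0 := (A.h4 0 le_rfl).1
  set K₀ : ℝ := Hf P 0 ^ i / (Nat.factorial i : ℝ) with hK₀
  have hK₀nn : 0 ≤ K₀ := by positivity
  have hGle : ∀ t, 0 ≤ t → Gfun P i t ≤ K₀ := by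
    intro t ht
    refine (hGb t ht).2.trans ?_
    apply div_le_div_of_nonneg_right _ hfacpos.le
    exact pow_le_pow_left₀ (A.h4 t ht).1 (A.h5 0 t le_rfl ht) i
  have hQH : ∀ t, 0 ≤ t → Qf P t * Hf P t ^ i / (Nat.factorial i : ℝ)
      ≤ C / ε * K₀ * Real.exp (-ε * t) := by
    intro t ht
    have h1 : 0 ≤ Hf P t := (A.h4 t ht).1
    have h2 : Hf P t ^ i ≤ Hf P 0 ^ i := pow_le_pow_left₀ h1 (A.h5 0 t le_rfl ht) i
    calc Qf P t * Hf P t ^ i / (Nat.factorial i : ℝ)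
        ≤ (C / ε * Real.exp (-ε * t)) * (Hf P 0 ^ i / (Nat.factorial i : ℝ)) := by
          rw [mul_div_assoc]
          exact mul_le_mul (A.q4 t ht).2 (div_le_div_of_nonneg_right h2 hfacpos.le)
            (div_nonneg (pow_nonneg h1 i) hfacpos.le)
            (mul_nonneg (div_nonneg A.hC.le A.hε.le) (Real.exp_pos _).le)
      _ = C / ε * K₀ * Real.exp (-ε * t) := by rw [hK₀]; ring
  have hQHnn : ∀ t, 0 ≤ t → 0 ≤ Qf P t * Hf P t ^ i / (Nat.factorial i : ℝ) := by
    intro t ht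
    exact div_nonneg (mul_nonneg (A.q4 t ht).1 (pow_nonneg (A.h4 t ht).1 i)) hfacpos.le
  have hmc : ContinuousOn (fun t => g2 P t * Gfun P i t) (Ici 0) :=
    A.g2c.continuousOn.mul hGc
  have hmnn : ∀ t, 0 ≤ t → 0 ≤ g2 P t * Gfun P i t :=
    fun t ht => mul_nonneg (A.g2nn t ht) (hGb t ht).1
  have hmb : ∀ t, 0 ≤ t → g2 P t * Gfun P i t ≤ C * K₀ * Real.exp (-ε * t) := by
    intro t ht
    calc g2 P t * Gfun P i t ≤ (C * Real.exp (-ε * t)) * K₀ :=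
          mul_le_mul (A.dec t ht) (hGle t ht) (hGb t ht).1
            (mul_nonneg A.hC.le (Real.exp_pos _).le)
      _ = C * K₀ * Real.exp (-ε * t) := by ring
  have hmint : IntegrableOn (fun t => g2 P t * Gfun P i t) (Ioi 0) := by
    refine integrableOn_of_decay (K := C * K₀) A.hε
      ((hmc.mono Ioi_subset_Ici_self).aestronglyMeasurable measurableSet_Ioi)
      (fun t ht => ?_)
    rw [abs_of_nonneg (hmnn t ht)]; exact hmb t ht
  obtain ⟨mi', _, Fc, Fd⟩ := tail_facts _ hmc hmint
  have hFc : ContinuousOn (Ff P i) (Ici 0) := Fc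
  have hFd : ∀ z, 0 < z → HasDerivAt (Ff P i) (-(g2 P z * Gfun P i z)) z := Fd
  have hFb : ∀ z, 0 ≤ z → 0 ≤ Ff P i z ∧
      Ff P i z ≤ Qf P z * Hf P z ^ i / (Nat.factorial i : ℝ) := by
    intro z hz
    constructor
    · exact tail_nonneg _ hmnn hz
    · have hint2 : IntegrableOn (fun t => g2 P t * (Hf P z ^ i / (Nat.factorial i : ℝ)))
          (Ioi z) := (A.q1.mono_set (Ioi_subset_Ioi hz)).mul_const _
      have h := setIntegral_mono_on (mi' z hz) hint2 measurableSet_Ioi (fun t ht => ?_)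
      · calc Ff P i z ≤ ∫ t in Ioi z, g2 P t * (Hf P z ^ i / (Nat.factorial i : ℝ)) := h
          _ = Qf P z * Hf P z ^ i / (Nat.factorial i : ℝ) := by
              rw [MeasureTheory.integral_mul_const, Qf]; ring
      · have ht' : 0 ≤ t := hz.trans (le_of_lt ht)
        refine mul_le_mul_of_nonneg_left ?_ (A.g2nn t ht')
        refine (hGb t ht').2.trans (div_le_div_of_nonneg_right ?_ hfacpos.le)
        exact pow_le_pow_left₀ (A.h4 t ht').1 (A.h5 z t hz (le_of_lt ht)) i
  have hFdecay : ∀ t, 0 ≤ t → |Ff P i t| ≤ C / ε * K₀ * Real.exp (-ε * t) := by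
    intro t ht
    rw [abs_of_nonneg (hFb t ht).1]
    exact (hFb t ht).2.trans (hQH t ht)
  have hFint : IntegrableOn (Ff P i) (Ioi 0) := by
    refine integrableOn_of_decay (K := C / ε * K₀) A.hε
      ((hFc.mono Ioi_subset_Ici_self).aestronglyMeasurable measurableSet_Ioi) hFdecay
  obtain ⟨Fi', _, Gc, Gd⟩ := tail_facts (Ff P i) hFc hFint
  have hGeq : Gfun P (i + 1) = fun x => ∫ y in Ioi x, Ff P i y := rfl
  refine ⟨hFc, hFb, hFd, ?_, ?_, ?_⟩
  · intro z hz; rw [hGeq]; exact Gd z hz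
  · rw [hGeq]; exact Gc
  · intro z hz
    constructor
    · rw [hGeq]
      exact tail_nonneg _ (fun t ht => (hFb t ht).1) hz
    · -- the majorant integral
      have hmajc : ContinuousOn (fun t => Qf P t * Hf P t ^ i / (Nat.factorial i : ℝ))
          (Ici 0) := ((A.q2.mul (A.h2.pow i)).div_const _)
      have hmajint : IntegrableOn (fun t => Qf P t * Hf P t ^ i / (Nat.factorial i : ℝ))
          (Ioi z) := by
        refine (integrableOn_of_decay (K := C / ε * K₀) A.hε
          ((hmajc.mono Ioi_subset_Ici_self).aestronglyMeasurable measurableSet_Ioi)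
          (fun t ht => ?_)).mono_set (Ioi_subset_Ioi hz)
        rw [abs_of_nonneg (hQHnn t ht)]
        exact hQH t ht
      have hval : (∫ t in Ioi z, Qf P t * Hf P t ^ i / (Nat.factorial i : ℝ))
          = Hf P z ^ (i + 1) / (((i:ℝ) + 1) * (Nat.factorial i : ℝ)) := by
        have hderiv : ∀ t ∈ Ioi z, HasDerivAt
            (fun y => -(Hf P y ^ (i + 1)) / (((i:ℝ) + 1) * (Nat.factorial i : ℝ)))
            (Qf P t * Hf P t ^ i / (Nat.factorial i : ℝ)) t := by
          intro t ht
          have ht' : 0 < t := lt_of_le_of_lt hz ht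
          have h1 : HasDerivAt
              (fun y => -(Hf P y ^ (i + 1)) / (((i:ℝ) + 1) * (Nat.factorial i : ℝ)))
              (-(((i + 1 : ℕ) : ℝ) * Hf P t ^ i * -(Qf P t))
                / (((i:ℝ) + 1) * (Nat.factorial i : ℝ))) t :=
            ((A.h3 t ht').fun_pow (i + 1)).neg.div_const
            (((i:ℝ) + 1) * (Nat.factorial i : ℝ))
          convert h1 using 1
          have : (0:ℝ) < (i:ℝ) + 1 := by positivity
          field_simp
          push_cast
          ring
        have hcw : ContinuousWithinAt
            (fun y => -(Hf P y ^ (i + 1)) / (((i:ℝ) + 1) * (Nat.factorial i : ℝ)))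
            (Ici z) z := by
          have := ((A.h2.pow (i + 1)).neg.div_const
            (((i:ℝ) + 1) * (Nat.factorial i : ℝ))).mono (Ici_subset_Ici.2 hz)
          exact this z self_mem_Ici
        have htend : Tendsto
            (fun y => -(Hf P y ^ (i + 1)) / (((i:ℝ) + 1) * (Nat.factorial i : ℝ)))
            atTop (𝓝 0) := by
          have := ((A.h6.pow (i + 1)).neg).div_const (((i:ℝ) + 1) * (Nat.factorial i : ℝ))
          simpa [zero_pow] using this
        have h := integral_Ioi_of_hasDerivAt_of_tendsto hcw hderiv hmajint htend
        rw [h]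
        ring
      rw [hGeq]
      calc (∫ y in Ioi z, Ff P i y)
          ≤ ∫ t in Ioi z, Qf P t * Hf P t ^ i / (Nat.factorial i : ℝ) :=
            setIntegral_mono_on (Fi' z hz) hmajint measurableSet_Ioi
              (fun t ht => (hFb t (hz.trans (le_of_lt ht))).2)
        _ = Hf P z ^ (i + 1) / (((i:ℝ) + 1) * (Nat.factorial i : ℝ)) := hval
        _ = Hf P z ^ (i + 1) / (Nat.factorial (i + 1) : ℝ) := by
            rw [Nat.factorial_succ]
            push_cast
            ring

lemma G_all {P : ℕ → ℝ} {C ε : ℝ} (A : Aux P C ε) : ∀ i : ℕ,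
    ContinuousOn (Gfun P i) (Ici 0) ∧
    (∀ z, 0 ≤ z → 0 ≤ Gfun P i z ∧ Gfun P i z ≤ Hf P z ^ i / (Nat.factorial i : ℝ)) := by
  intro i
  induction i with
  | zero =>
      refine ⟨continuousOn_const, fun z hz => ⟨zero_le_one, ?_⟩⟩
      simp [Gfun]
  | succ i ih =>
      obtain ⟨-, -, -, -, gc, gb⟩ := step A i ih.1 ih.2
      exact ⟨gc, gb⟩

lemma key {P : ℕ → ℝ} {C ε : ℝ} (A : Aux P C ε) (x : ℝ) (hx : 0 ≤ x) (w : ℂ)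
    (hwim : w.im ≠ 0) (hzero : (∑' i : ℕ, (Gfun P i x : ℂ) * w ^ i) = 0) : False := by
  classical
  have hG := G_all A
  have hstep := fun i => step A i (hG i).1 (hG i).2
  set W : ℝ := ‖w‖ with hW
  have hWnn : 0 ≤ W := norm_nonneg _
  set H0 : ℝ := Hf P 0 with hH0def
  have hH0nn : 0 ≤ H0 := (A.h4 0 le_rfl).1
  set Q0 : ℝ := Qf P 0 with hQ0def
  have hQ0nn : 0 ≤ Q0 := (A.q4 0 le_rfl).1
  have hfac : ∀ i : ℕ, (0:ℝ) < (Nat.factorial i : ℝ) := fun i => by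
    exact_mod_cast Nat.factorial_pos i
  have hBsum : Summable (fun i : ℕ => (H0 * W) ^ i / (Nat.factorial i : ℝ)) :=
    Real.summable_pow_div_factorial _
  -- bounds on terms
  have hGnorm : ∀ (i : ℕ) (z : ℝ), 0 ≤ z →
      ‖(Gfun P i z : ℂ) * w ^ i‖ ≤ (H0 * W) ^ i / (Nat.factorial i : ℝ) := by
    intro i z hz
    rw [norm_mul, norm_pow, Complex.norm_real, Real.norm_eq_abs,
      abs_of_nonneg ((hG i).2 z hz).1]
    calc Gfun P i z * ‖w‖ ^ i ≤ Hf P z ^ i / (Nat.factorial i : ℝ) * W ^ i := by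
          refine mul_le_mul_of_nonneg_right ((hG i).2 z hz).2 ?_
          exact pow_nonneg hWnn i
      _ ≤ H0 ^ i / (Nat.factorial i : ℝ) * W ^ i := by
          refine mul_le_mul_of_nonneg_right (div_le_div_of_nonneg_right ?_ (hfac i).le)
            (pow_nonneg hWnn i)
          exact pow_le_pow_left₀ (A.h4 z hz).1 (A.h5 0 z le_rfl hz) i
      _ = (H0 * W) ^ i / (Nat.factorial i : ℝ) := by
          rw [mul_pow]; ring
  have hFnorm : ∀ (i : ℕ) (z : ℝ), 0 ≤ z →
      ‖(Ff P i z : ℂ) * w ^ (i + 1)‖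
        ≤ Q0 * W * ((H0 * W) ^ i / (Nat.factorial i : ℝ)) := by
    intro i z hz
    rw [norm_mul, norm_pow, Complex.norm_real, Real.norm_eq_abs,
      abs_of_nonneg (((hstep i).2.1 z hz)).1]
    have h1 : Ff P i z ≤ Q0 * (H0 ^ i / (Nat.factorial i : ℝ)) := by
      refine ((hstep i).2.1 z hz).2.trans ?_
      rw [mul_div_assoc]
      refine mul_le_mul (A.q5 0 z le_rfl hz) (div_le_div_of_nonneg_right ?_ (hfac i).le)
        (div_nonneg (pow_nonneg (A.h4 z hz).1 i) (hfac i).le) hQ0nn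
      exact pow_le_pow_left₀ (A.h4 z hz).1 (A.h5 0 z le_rfl hz) i
    calc Ff P i z * ‖w‖ ^ (i + 1)
        ≤ (Q0 * (H0 ^ i / (Nat.factorial i : ℝ))) * W ^ (i + 1) :=
          mul_le_mul_of_nonneg_right h1 (pow_nonneg hWnn _)
      _ = Q0 * W * ((H0 * W) ^ i / (Nat.factorial i : ℝ)) := by
          rw [mul_pow, pow_succ]
          ring
  set u : ℝ → ℂ := fun z => ∑' i : ℕ, (Gfun P i z : ℂ) * w ^ i with hudef
  set v : ℝ → ℂ := fun z => ∑' i : ℕ, (Ff P i z : ℂ) * w ^ (i + 1) with hvdef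
  have husum : ∀ z, 0 ≤ z → Summable (fun i : ℕ => (Gfun P i z : ℂ) * w ^ i) := fun z hz =>
    Summable.of_norm (Summable.of_nonneg_of_le (fun i => norm_nonneg _)
      (fun i => hGnorm i z hz) hBsum)
  have hFsumR : Summable (fun i : ℕ => Q0 * W * ((H0 * W) ^ i / (Nat.factorial i : ℝ))) :=
    hBsum.mul_left _
  have hvsum : ∀ z, 0 ≤ z → Summable (fun i : ℕ => (Ff P i z : ℂ) * w ^ (i + 1)) := fun z hz =>
    Summable.of_norm (Summable.of_nonneg_of_le (fun i => norm_nonneg _)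
      (fun i => hFnorm i z hz) hFsumR)
  have hucont : ContinuousOn u (Ici 0) := by
    refine continuousOn_tsum (fun i => ?_) hBsum (fun i z hz => hGnorm i z hz)
    exact (Complex.continuous_ofReal.comp_continuousOn (hG i).1).mul continuousOn_const
  have hvcont : ContinuousOn v (Ici 0) := by
    refine continuousOn_tsum (fun i => ?_) hFsumR (fun i z hz => hFnorm i z hz)
    exact (Complex.continuous_ofReal.comp_continuousOn (hstep i).1).mul continuousOn_const
  -- derivative of u
  set gd : ℕ → ℝ → ℂ := fun n => match n with
    | 0 => fun _ => (0:ℂ)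
    | (m+1) => fun z => -(Ff P m z : ℂ) * w ^ (m + 1) with hgd
  set bb : ℕ → ℝ := fun n => match n with
    | 0 => 0
    | (m+1) => Q0 * W * ((H0 * W) ^ m / (Nat.factorial m : ℝ)) with hbb
  have hbbsum : Summable bb := by
    have h1 : Summable fun n => bb (n + 1) := by
      simpa [hbb] using hFsumR
    exact (summable_nat_add_iff 1).1 h1
  have hgderiv : ∀ (n : ℕ) (y : ℝ), y ∈ Ioi (0:ℝ) →
      HasDerivAt (fun z : ℝ => (Gfun P n z : ℂ) * w ^ n) (gd n y) y := by
    intro n y hy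
    cases n with
    | zero =>
        have h1 : (fun z : ℝ => (Gfun P 0 z : ℂ) * w ^ 0) = fun _ => (1:ℂ) := by
          funext z; simp [Gfun]
        rw [h1]
        simpa [hgd] using hasDerivAt_const y (1:ℂ)
    | succ m =>
        have hd := (hstep m).2.2.2.1 y hy
        have h2 := (hd.ofReal_comp).mul_const (w ^ (m + 1))
        simpa [hgd] using h2
  have hgbound : ∀ (n : ℕ) (y : ℝ), y ∈ Ioi (0:ℝ) → ‖gd n y‖ ≤ bb n := by
    intro n y hy
    cases n with
    | zero => simp [hgd, hbb]
    | succ m =>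
        have h1 := hFnorm m y (le_of_lt hy)
        have h2 : ‖gd (m+1) y‖ = ‖(Ff P m y : ℂ) * w ^ (m + 1)‖ := by
          simp [hgd]
        rw [h2]
        simpa [hbb] using h1
  have hudAt : ∀ y : ℝ, y ∈ Ioi (0:ℝ) → HasDerivAt u (∑' n, gd n y) y := fun y hy =>
    hasDerivAt_tsum_of_isPreconnected hbbsum isOpen_Ioi isPreconnected_Ioi hgderiv hgbound
      (show (1:ℝ) ∈ Ioi 0 from mem_Ioi.2 zero_lt_one) (husum 1 zero_le_one) hy
  have hud : ∀ y : ℝ, 0 < y → HasDerivAt u (-(v y)) y := by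
    intro y hy
    have hsum : Summable (fun n => gd n y) :=
      Summable.of_norm (Summable.of_nonneg_of_le (fun n => norm_nonneg _)
        (fun n => hgbound n y hy) hbbsum)
    have heq : (∑' n, gd n y) = -(v y) := by
      rw [Summable.tsum_eq_zero_add hsum]
      have h0 : gd 0 y = 0 := rfl
      rw [h0, zero_add]
      have h1 : ∀ n : ℕ, gd (n + 1) y = -((Ff P n y : ℂ) * w ^ (n + 1)) := by
        intro n; simp [hgd]
      calc (∑' n, gd (n + 1) y) = ∑' n, -((Ff P n y : ℂ) * w ^ (n + 1)) := tsum_congr h1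
        _ = -(v y) := by rw [tsum_neg]
    rw [← heq]
    exact hudAt y hy
  -- derivative of v
  have hg2leC : ∀ t : ℝ, 0 ≤ t → g2 P t ≤ C := by
    intro t ht
    refine (A.dec t ht).trans ?_
    calc C * Real.exp (-ε * t) ≤ C * 1 := by
          refine mul_le_mul_of_nonneg_left ?_ A.hC.le
          rw [Real.exp_le_one_iff]
          have := A.hε
          nlinarith
      _ = C := mul_one C
  have hccsum : Summable (fun n : ℕ => C * W * ((H0 * W) ^ n / (Nat.factorial n : ℝ))) :=
    hBsum.mul_left _
  have hvderivterm : ∀ (n : ℕ) (y : ℝ), y ∈ Ioi (0:ℝ) →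
      HasDerivAt (fun z : ℝ => (Ff P n z : ℂ) * w ^ (n + 1))
        ((-(g2 P y * Gfun P n y) : ℝ) * w ^ (n + 1)) y := by
    intro n y hy
    exact ((hstep n).2.2.1 y hy).ofReal_comp.mul_const _
  have hvbound : ∀ (n : ℕ) (y : ℝ), y ∈ Ioi (0:ℝ) →
      ‖((-(g2 P y * Gfun P n y) : ℝ) : ℂ) * w ^ (n + 1)‖
        ≤ C * W * ((H0 * W) ^ n / (Nat.factorial n : ℝ)) := by
    intro n y hy
    have hy' : (0:ℝ) ≤ y := le_of_lt hy
    rw [norm_mul, norm_pow, Complex.norm_real, Real.norm_eq_abs, abs_neg,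
      abs_of_nonneg (mul_nonneg (A.g2nn y hy') ((hG n).2 y hy').1)]
    have h1 : g2 P y * Gfun P n y ≤ C * (H0 ^ n / (Nat.factorial n : ℝ)) := by
      refine mul_le_mul (hg2leC y hy') ?_ ((hG n).2 y hy').1 A.hC.le
      refine ((hG n).2 y hy').2.trans (div_le_div_of_nonneg_right ?_ (hfac n).le)
      exact pow_le_pow_left₀ (A.h4 y hy').1 (A.h5 0 y le_rfl hy') n
    calc g2 P y * Gfun P n y * ‖w‖ ^ (n + 1)
        ≤ C * (H0 ^ n / (Nat.factorial n : ℝ)) * W ^ (n + 1) :=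
          mul_le_mul_of_nonneg_right h1 (pow_nonneg hWnn _)
      _ = C * W * ((H0 * W) ^ n / (Nat.factorial n : ℝ)) := by
          rw [mul_pow, pow_succ]; ring
  have hvdAt : ∀ y : ℝ, y ∈ Ioi (0:ℝ) → HasDerivAt v
      (∑' n, ((-(g2 P y * Gfun P n y) : ℝ) : ℂ) * w ^ (n + 1)) y := fun y hy =>
    hasDerivAt_tsum_of_isPreconnected hccsum isOpen_Ioi isPreconnected_Ioi hvderivterm hvbound
      (show (1:ℝ) ∈ Ioi 0 from mem_Ioi.2 zero_lt_one) (hvsum 1 zero_le_one) hy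
  have hvd : ∀ y : ℝ, 0 < y → HasDerivAt v (-(g2 P y : ℂ) * w * u y) y := by
    intro y hy
    have heq : (∑' n, ((-(g2 P y * Gfun P n y) : ℝ) : ℂ) * w ^ (n + 1))
        = -(g2 P y : ℂ) * w * u y := by
      have h1 : ∀ n : ℕ, ((-(g2 P y * Gfun P n y) : ℝ) : ℂ) * w ^ (n + 1)
          = (-(g2 P y : ℂ) * w) * ((Gfun P n y : ℂ) * w ^ n) := by
        intro n
        push_cast
        ring
      calc (∑' n, ((-(g2 P y * Gfun P n y) : ℝ) : ℂ) * w ^ (n + 1))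
          = ∑' n, (-(g2 P y : ℂ) * w) * ((Gfun P n y : ℂ) * w ^ n) := tsum_congr h1
        _ = (-(g2 P y : ℂ) * w) * u y := tsum_mul_left
    rw [← heq]
    exact hvdAt y hy
  -- limits at infinity
  set E : ℝ := ∑' n : ℕ, (H0 * W) ^ n / (Nat.factorial n : ℝ) with hE
  have hEnn : 0 ≤ E := tsum_nonneg fun n => div_nonneg (pow_nonneg (mul_nonneg hH0nn hWnn) n)
    (hfac n).le
  have hterm2 : ∀ (n : ℕ) (T : ℝ), 0 ≤ T →
      ‖(Gfun P (n + 1) T : ℂ) * w ^ (n + 1)‖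
        ≤ Hf P T * W * ((H0 * W) ^ n / (Nat.factorial n : ℝ)) := by
    intro n T hT
    have hHT : 0 ≤ Hf P T := (A.h4 T hT).1
    rw [norm_mul, norm_pow, Complex.norm_real, Real.norm_eq_abs,
      abs_of_nonneg ((hG (n + 1)).2 T hT).1]
    have h1 : Gfun P (n + 1) T ≤ Hf P T * H0 ^ n / (Nat.factorial n : ℝ) := by
      refine ((hG (n + 1)).2 T hT).2.trans ?_
      have h2 : Hf P T ^ (n + 1) / (Nat.factorial (n + 1) : ℝ)
          ≤ Hf P T ^ (n + 1) / (Nat.factorial n : ℝ) := by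
        refine div_le_div_of_nonneg_left (pow_nonneg hHT _) (hfac n) ?_
        exact_mod_cast Nat.factorial_le (Nat.le_succ n)
      refine h2.trans ?_
      rw [pow_succ']
      refine div_le_div_of_nonneg_right ?_ (hfac n).le
      exact mul_le_mul_of_nonneg_left
        (pow_le_pow_left₀ hHT (A.h5 0 T le_rfl hT) n) hHT
    calc Gfun P (n + 1) T * ‖w‖ ^ (n + 1)
        ≤ Hf P T * H0 ^ n / (Nat.factorial n : ℝ) * W ^ (n + 1) :=
          mul_le_mul_of_nonneg_right h1 (pow_nonneg hWnn _)
      _ = Hf P T * W * ((H0 * W) ^ n / (Nat.factorial n : ℝ)) := by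
          rw [mul_pow, pow_succ]; ring
  have huerr : ∀ T : ℝ, 0 ≤ T → ‖u T - 1‖ ≤ Hf P T * W * E := by
    intro T hT
    have hs := husum T hT
    have h1 : u T = 1 + ∑' n : ℕ, (Gfun P (n + 1) T : ℂ) * w ^ (n + 1) := by
      have huT : u T = ∑' i : ℕ, (Gfun P i T : ℂ) * w ^ i := rfl
      rw [huT, Summable.tsum_eq_zero_add hs]
      congr 1
      have : Gfun P 0 T = 1 := rfl
      rw [this]
      simp
    rw [h1]
    have h3 : Summable fun n : ℕ => ‖(Gfun P (n + 1) T : ℂ) * w ^ (n + 1)‖ := by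
      refine Summable.of_nonneg_of_le (fun n => norm_nonneg _) (fun n => hterm2 n T hT)
        (hBsum.mul_left (Hf P T * W))
    calc ‖1 + (∑' n : ℕ, (Gfun P (n + 1) T : ℂ) * w ^ (n + 1)) - 1‖
        = ‖∑' n : ℕ, (Gfun P (n + 1) T : ℂ) * w ^ (n + 1)‖ := by
          rw [add_sub_cancel_left]
      _ ≤ ∑' n : ℕ, ‖(Gfun P (n + 1) T : ℂ) * w ^ (n + 1)‖ := norm_tsum_le_tsum_norm h3
      _ ≤ ∑' n : ℕ, Hf P T * W * ((H0 * W) ^ n / (Nat.factorial n : ℝ)) :=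
          Summable.tsum_le_tsum (fun n => hterm2 n T hT) h3 (hBsum.mul_left _)
      _ = Hf P T * W * E := by rw [hE, tsum_mul_left]
  have htendu : Tendsto u atTop (𝓝 1) := by
    have h0 : Tendsto (fun T => Hf P T * W * E) atTop (𝓝 0) := by
      have := (A.h6.mul_const W).mul_const E
      simpa using this
    have h1 : Tendsto (fun T => u T - 1) atTop (𝓝 0) := by
      refine squeeze_zero_norm' ?_ h0
      filter_upwards [eventually_ge_atTop (0:ℝ)] with T hT using huerr T hT
    have := h1.add_const 1
    simpa using this
  have hverr : ∀ T : ℝ, 0 ≤ T → ‖v T‖ ≤ Qf P T * W * E := by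
    intro T hT
    have hterm3 : ∀ n : ℕ, ‖(Ff P n T : ℂ) * w ^ (n + 1)‖
        ≤ Qf P T * W * ((H0 * W) ^ n / (Nat.factorial n : ℝ)) := by
      intro n
      rw [norm_mul, norm_pow, Complex.norm_real, Real.norm_eq_abs,
        abs_of_nonneg ((hstep n).2.1 T hT).1]
      have h1 : Ff P n T ≤ Qf P T * (H0 ^ n / (Nat.factorial n : ℝ)) := by
        refine ((hstep n).2.1 T hT).2.trans ?_
        rw [mul_div_assoc]
        refine mul_le_mul_of_nonneg_left (div_le_div_of_nonneg_right ?_ (hfac n).le)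
          (A.q4 T hT).1
        exact pow_le_pow_left₀ (A.h4 T hT).1 (A.h5 0 T le_rfl hT) n
      calc Ff P n T * ‖w‖ ^ (n + 1)
          ≤ Qf P T * (H0 ^ n / (Nat.factorial n : ℝ)) * W ^ (n + 1) :=
            mul_le_mul_of_nonneg_right h1 (pow_nonneg hWnn _)
        _ = Qf P T * W * ((H0 * W) ^ n / (Nat.factorial n : ℝ)) := by
            rw [mul_pow, pow_succ]; ring
    have h3 : Summable fun n : ℕ => ‖(Ff P n T : ℂ) * w ^ (n + 1)‖ :=
      Summable.of_nonneg_of_le (fun n => norm_nonneg _) hterm3 (hBsum.mul_left _)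
    calc ‖v T‖ ≤ ∑' n : ℕ, ‖(Ff P n T : ℂ) * w ^ (n + 1)‖ := norm_tsum_le_tsum_norm h3
      _ ≤ ∑' n : ℕ, Qf P T * W * ((H0 * W) ^ n / (Nat.factorial n : ℝ)) :=
          Summable.tsum_le_tsum hterm3 h3 (hBsum.mul_left _)
      _ = Qf P T * W * E := by rw [hE, tsum_mul_left]
  have htendv : Tendsto v atTop (𝓝 0) := by
    have h0 : Tendsto (fun T => Qf P T * W * E) atTop (𝓝 0) := by
      have := (A.q6.mul_const W).mul_const E
      simpa using this
    refine squeeze_zero_norm' ?_ h0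
    filter_upwards [eventually_ge_atTop (0:ℝ)] with T hT using hverr T hT
  -- the energy identity
  set Φ : ℝ → ℂ := fun z => -(v z) * star (u z) with hΦ
  have hΦd : ∀ z : ℝ, 0 < z → HasDerivAt Φ
      (w * ((g2 P z * Complex.normSq (u z) : ℝ) : ℂ)
        + ((Complex.normSq (v z) : ℝ) : ℂ)) z := by
    intro z hz
    have h1 := hud z hz
    have h2 := hvd z hz
    have h3 : HasDerivAt (fun y => star (u y)) (star (-(v z))) z := h1.star
    have h4 : HasDerivAt (fun y => -(v y) * star (u y))
        (-(-(g2 P z : ℂ) * w * u z) * star (u z) + -(v z) * star (-(v z))) z :=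
      (h2.neg).mul h3
    convert h4 using 1
    have e1 : u z * star (u z) = ((Complex.normSq (u z) : ℝ) : ℂ) := by
      rw [Complex.star_def, Complex.mul_conj]
    have e2 : v z * star (v z) = ((Complex.normSq (v z) : ℝ) : ℂ) := by
      rw [Complex.star_def, Complex.mul_conj]
    rw [show star (-(v z)) = -star (v z) from star_neg _]
    push_cast
    rw [← e1, ← e2]
    push_cast
    ring
  have hIccsub : ∀ T : ℝ, Icc x T ⊆ Ici (0:ℝ) := fun T t ht => hx.trans ht.1
  have hg2nsqC : ContinuousOn (fun z => g2 P z * Complex.normSq (u z)) (Ici 0) :=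
    A.g2c.continuousOn.mul (Complex.continuous_normSq.comp_continuousOn hucont)
  have hnsqvC : ContinuousOn (fun z => Complex.normSq (v z)) (Ici 0) :=
    Complex.continuous_normSq.comp_continuousOn hvcont
  have hii1 : ∀ T, x ≤ T → IntervalIntegrable
      (fun z => g2 P z * Complex.normSq (u z)) volume x T := by
    intro T hT
    apply ContinuousOn.intervalIntegrable
    rw [uIcc_of_le hT]
    exact hg2nsqC.mono (hIccsub T)
  have hii2 : ∀ T, x ≤ T → IntervalIntegrable
      (fun z => Complex.normSq (v z)) volume x T := by
    intro T hT
    apply ContinuousOn.intervalIntegrable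
    rw [uIcc_of_le hT]
    exact hnsqvC.mono (hIccsub T)
  set I1 : ℝ → ℝ := fun T => ∫ z in x..T, g2 P z * Complex.normSq (u z) with hI1
  set I2 : ℝ → ℝ := fun T => ∫ z in x..T, Complex.normSq (v z) with hI2
  have hux : u x = 0 := hzero
  have hsplitInt : ∀ T, x ≤ T → w * (I1 T : ℂ) + (I2 T : ℂ) = Φ T := by
    intro T hT
    have hC1 : ContinuousOn Φ (Icc x T) := by
      refine ((hvcont.mono (hIccsub T)).neg).mul ?_
      exact continuous_star.comp_continuousOn (hucont.mono (hIccsub T))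
    have hderiv : ∀ z ∈ Ioo x T, HasDerivWithinAt Φ
        (w * ((g2 P z * Complex.normSq (u z) : ℝ) : ℂ)
          + ((Complex.normSq (v z) : ℝ) : ℂ)) (Ioi z) z :=
      fun z hzz => (hΦd z (lt_of_le_of_lt hx hzz.1)).hasDerivWithinAt
    have hint : IntervalIntegrable (fun z => w * ((g2 P z * Complex.normSq (u z) : ℝ) : ℂ)
        + ((Complex.normSq (v z) : ℝ) : ℂ)) volume x T := by
      apply ContinuousOn.intervalIntegrable
      rw [uIcc_of_le hT]
      refine ContinuousOn.add ?_ ?_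
      · exact continuousOn_const.mul
          (Complex.continuous_ofReal.comp_continuousOn (hg2nsqC.mono (hIccsub T)))
      · exact Complex.continuous_ofReal.comp_continuousOn (hnsqvC.mono (hIccsub T))
    have h := intervalIntegral.integral_eq_sub_of_hasDeriv_right_of_le hT hC1 hderiv hint
    have hΦx : Φ x = 0 := by
      rw [hΦ]
      simp [hux]
    rw [hΦx, sub_zero] at h
    rw [← h]
    rw [intervalIntegral.integral_add ?_ ?_]
    · congr 1
      · rw [intervalIntegral.integral_const_mul, intervalIntegral.integral_ofReal]
      · rw [intervalIntegral.integral_ofReal]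
    · refine ContinuousOn.intervalIntegrable ?_
      rw [uIcc_of_le hT]
      exact continuousOn_const.mul
        (Complex.continuous_ofReal.comp_continuousOn (hg2nsqC.mono (hIccsub T)))
    · refine ContinuousOn.intervalIntegrable ?_
      rw [uIcc_of_le hT]
      exact Complex.continuous_ofReal.comp_continuousOn (hnsqvC.mono (hIccsub T))
  have hΦtend : Tendsto Φ atTop (𝓝 0) := by
    have h := (htendv.mul (htendu.star)).neg
    show Tendsto (fun z => -(v z) * star (u z)) atTop (𝓝 0)
    simpa [neg_mul] using h
  have hI1eq : ∀ T, x ≤ T → I1 T = (Φ T).im / w.im := by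
    intro T hT
    have h := congrArg Complex.im (hsplitInt T hT)
    simp only [Complex.add_im, Complex.mul_im, Complex.ofReal_re, Complex.ofReal_im,
      mul_zero, add_zero, zero_add] at h
    rw [eq_div_iff hwim]
    linarith
  have hI1tend : Tendsto I1 atTop (𝓝 0) := by
    have h2 : Tendsto (fun T => (Φ T).im / w.im) atTop (𝓝 0) := by
      have h3 : Tendsto (fun T => (Φ T).im) atTop (𝓝 0) := by
        have := (Complex.continuous_im.tendsto 0).comp hΦtend
        rw [Complex.zero_im] at this; exact this
      simpa using h3.div_const w.im
    refine h2.congr' ?_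
    filter_upwards [eventually_ge_atTop x] with T hT using (hI1eq T hT).symm
  have hI1mono : ∀ T T', x ≤ T → T ≤ T' → I1 T ≤ I1 T' := by
    intro T T' h1 h2
    have hmid : IntervalIntegrable (fun z => g2 P z * Complex.normSq (u z)) volume T T' := by
      apply ContinuousOn.intervalIntegrable
      rw [uIcc_of_le h2]
      exact hg2nsqC.mono (fun t ht => (hx.trans h1).trans ht.1)
    have hadd := intervalIntegral.integral_add_adjacent_intervals (hii1 T h1) hmid
    have hpos : 0 ≤ ∫ z in T..T', g2 P z * Complex.normSq (u z) := by
      refine intervalIntegral.integral_nonneg h2 (fun t ht => ?_)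
      exact mul_nonneg (A.g2nn t ((hx.trans h1).trans ht.1)) (Complex.normSq_nonneg _)
    rw [hI1]
    dsimp only
    rw [← hadd]
    linarith
  have hI1nn : ∀ T, x ≤ T → 0 ≤ I1 T := by
    intro T hT
    refine intervalIntegral.integral_nonneg hT (fun t ht => ?_)
    exact mul_nonneg (A.g2nn t (hx.trans ht.1)) (Complex.normSq_nonneg _)
  have hI1zero : ∀ T, x ≤ T → I1 T = 0 := by
    intro T hT
    have hle : I1 T ≤ 0 := by
      refine ge_of_tendsto hI1tend ?_
      filter_upwards [eventually_ge_atTop T] with T' h' using hI1mono T T' hT h'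
    linarith [hI1nn T hT]
  have hI2eq : ∀ T, x ≤ T → I2 T = (Φ T).re - w.re * I1 T := by
    intro T hT
    have h := congrArg Complex.re (hsplitInt T hT)
    simp only [Complex.add_re, Complex.mul_re, Complex.ofReal_re, Complex.ofReal_im,
      mul_zero, sub_zero] at h
    linarith
  have hI2tend : Tendsto I2 atTop (𝓝 0) := by
    have h2 : Tendsto (fun T => (Φ T).re - w.re * I1 T) atTop (𝓝 0) := by
      have h3 : Tendsto (fun T => (Φ T).re) atTop (𝓝 0) := by
        have := (Complex.continuous_re.tendsto 0).comp hΦtend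
        rw [Complex.zero_re] at this; exact this
      have h4 := h3.sub ((hI1tend.const_mul w.re))
      simpa using h4
    refine h2.congr' ?_
    filter_upwards [eventually_ge_atTop x] with T hT using (hI2eq T hT).symm
  have hI2mono : ∀ T T', x ≤ T → T ≤ T' → I2 T ≤ I2 T' := by
    intro T T' h1 h2
    have hmid : IntervalIntegrable (fun z => Complex.normSq (v z)) volume T T' := by
      apply ContinuousOn.intervalIntegrable
      rw [uIcc_of_le h2]
      exact hnsqvC.mono (fun t ht => (hx.trans h1).trans ht.1)
    have hadd := intervalIntegral.integral_add_adjacent_intervals (hii2 T h1) hmid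
    have hpos : 0 ≤ ∫ z in T..T', Complex.normSq (v z) :=
      intervalIntegral.integral_nonneg h2 (fun t ht => Complex.normSq_nonneg _)
    rw [hI2]
    dsimp only
    rw [← hadd]
    linarith
  have hI2zero : ∀ T, x ≤ T → I2 T = 0 := by
    intro T hT
    have hle : I2 T ≤ 0 := by
      refine ge_of_tendsto hI2tend ?_
      filter_upwards [eventually_ge_atTop T] with T' h' using hI2mono T T' hT h'
    have hge : 0 ≤ I2 T :=
      intervalIntegral.integral_nonneg hT (fun t ht => Complex.normSq_nonneg _)
    linarith
  -- v vanishes a.e., hence u is constant on [x, ∞)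
  have huT : ∀ T, x ≤ T → u T = u x := by
    intro T hT
    have hC1 : ContinuousOn u (Icc x T) := hucont.mono (hIccsub T)
    have hderiv : ∀ z ∈ Ioo x T, HasDerivWithinAt u (-(v z)) (Ioi z) z :=
      fun z hz => (hud z (lt_of_le_of_lt hx hz.1)).hasDerivWithinAt
    have hint : IntervalIntegrable (fun z => -(v z)) volume x T := by
      apply ContinuousOn.intervalIntegrable
      rw [uIcc_of_le hT]
      exact (hvcont.mono (hIccsub T)).neg
    have h := intervalIntegral.integral_eq_sub_of_hasDeriv_right_of_le hT hC1 hderiv hint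
    have hae : ∀ᵐ z ∂(volume.restrict (Ioc x T)), v z = 0 := by
      have hnn : 0 ≤ᵐ[volume.restrict (Ioc x T)] fun z => Complex.normSq (v z) :=
        ae_of_all _ fun z => Complex.normSq_nonneg _
      have hint2 : Integrable (fun z => Complex.normSq (v z))
          (volume.restrict (Ioc x T)) := by
        exact (hii2 T hT).1
      have hI2' : (∫ z in Ioc x T, Complex.normSq (v z)) = 0 := by
        rw [← intervalIntegral.integral_of_le hT]
        exact hI2zero T hT
      have h0 := (integral_eq_zero_iff_of_nonneg_ae hnn hint2).1 hI2'
      filter_upwards [h0] with z hz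
      exact Complex.normSq_eq_zero.1 hz
    have hvint0 : (∫ z in x..T, -(v z)) = 0 := by
      rw [intervalIntegral.integral_of_le hT]
      have : (∫ z in Ioc x T, -(v z)) = ∫ z in Ioc x T, (0:ℂ) := by
        refine MeasureTheory.integral_congr_ae ?_
        filter_upwards [hae] with z hz
        simp [hz]
      rw [this]
      simp
    rw [hvint0] at h
    exact (sub_eq_zero.1 h.symm)
  -- contradiction with u → 1
  have htend0 : Tendsto u atTop (𝓝 0) := by
    have heq : u =ᶠ[atTop] fun _ => (0:ℂ) := by
      filter_upwards [eventually_ge_atTop x] with T hT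
      rw [huT T hT, hux]
    exact Tendsto.congr' heq.symm tendsto_const_nhds
  have h01 : (1:ℂ) = 0 := tendsto_nhds_unique htendu htend0
  simp at h01

/-- `L(β,x) = ∑_{i=0}^∞ G_i(x) (-1/β)^i` (real version). -/
noncomputable def Lfun (P : ℕ → ℝ) (β : ℝ) (x : ℝ) : ℝ :=
  ∑' i : ℕ, Gfun P i x * (-1 / β) ^ i

/-- `L(β,x) = ∑_{i=0}^∞ G_i(x) (-1/β)^i` (complex version). -/
noncomputable def Lc (P : ℕ → ℝ) (β : ℂ) (x : ℝ) : ℂ :=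
  ∑' i : ℕ, (Gfun P i x : ℂ) * (-1 / β) ^ i

theorem stmt_8 (P : ℕ → ℝ)
    (hP0 : P 0 = 0) (hPnonneg : ∀ k, 0 ≤ P k) (hPsum : ∑' k, P k = 1)
    (hPmean : Summable fun k : ℕ => (k : ℝ) * P k) (hP1 : P 1 < 1)
    (θ : ℝ) (hθ : 0 < θ)
    (hMθ : Summable fun k : ℕ => P k * Real.exp (θ * k))
    (x : ℝ) (hx : 0 ≤ x) (β : ℂ) (hβ : β ≠ 0) (hzero : Lc P β x = 0) :
    β.im = 0 := by
  by_contra him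
  have hPsummable : Summable P := by
    refine Summable.of_nonneg_of_le hPnonneg (fun k => ?_) hMθ
    calc P k = P k * 1 := (mul_one _).symm
      _ ≤ P k * Real.exp (θ * k) :=
          mul_le_mul_of_nonneg_left (Real.one_le_exp (by positivity)) (hPnonneg k)
  have hPb : ∀ k, P k ≤ 1 := fun k =>
    hPsum ▸ Summable.le_tsum hPsummable k (fun j _ => hPnonneg j)
  obtain ⟨C, ε, hC, hε, hε1, hdec⟩ := g2_decay P hθ hPnonneg hPb hMθ
  have A := aux_of P C ε (g2_cont P hPnonneg hPb)
    (fun z hz => g2_nonneg P hPnonneg hz) hC hε hε1 hdec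
  have hwim : (-1 / β).im ≠ 0 := by
    have hnormSq : Complex.normSq β ≠ 0 := (Complex.normSq_pos.2 hβ).ne'
    have h1 : (-1 / β).im = β.im / Complex.normSq β := by
      rw [neg_div, one_div, Complex.neg_im, Complex.inv_im]
      field_simp
    rw [h1]
    exact div_ne_zero him hnormSq
  exact key A x hx (-1 / β) hwim hzero
end

section
/- Assume there exists θ > 0 such that ∑_{k≥1} P(k)·e^{θ·k} < ∞, and let β₀ be as above. Then for every x ≥ 0, β₀·L(β₀,x) = ∫_0^x ∫_y^∞ g₂(z)·L(β₀,z) dz dy = ∫_0^∞ min(x,z)·g₂(z)·L(β₀,z) dz; that is, L(β₀,·) is an eigenfunction with eigenvalue β₀ of the integral operator with kernel min(x,z)·g₂(z). -/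
open MeasureTheory Real Set Filter
open scoped Topology

namespace Stmt11Aux

lemma integral_exp_neg_mul_Ioi {b : ℝ} (hb : 0 < b) (a : ℝ) :
    ∫ z in Ioi a, Real.exp (-b * z) = Real.exp (-b * a) / b := by
  have H : ∀ x ∈ Ici a, HasDerivAt (fun z => -(Real.exp (-b * z) / b))
      (Real.exp (-b * x)) x := by
    intro x _
    have h1 : HasDerivAt (fun z : ℝ => -b * z) (-b) x := by
      simpa using (hasDerivAt_id x).const_mul (-b)
    have := (h1.exp.div_const b).neg
    refine this.congr_deriv ?_
    rw [mul_neg, neg_div, neg_neg, mul_div_assoc, div_self hb.ne', mul_one]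
  have hint : IntegrableOn (fun z => Real.exp (-b * z)) (Ioi a) :=
    exp_neg_integrableOn_Ioi a hb
  have htend : Tendsto (fun z => -(Real.exp (-b * z) / b)) atTop (𝓝 0) := by
    have h2 : Tendsto (fun z : ℝ => -b * z) atTop atBot :=
      tendsto_id.const_mul_atTop_of_neg (neg_neg_iff_pos.2 hb)
    have := ((Real.tendsto_exp_atBot.comp h2).div_const b).neg
    simpa using this
  have := integral_Ioi_of_hasDerivAt_of_tendsto' H hint htend
  rw [this]; ring

lemma intOn_of_bound {f : ℝ → ℝ} {a C b : ℝ} (hb : 0 < b)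
    (hm : AEStronglyMeasurable f (volume.restrict (Ioi a)))
    (hbd : ∀ z ∈ Ioi a, ‖f z‖ ≤ C * Real.exp (-b * z)) :
    IntegrableOn f (Ioi a) := by
  refine Integrable.mono' ((exp_neg_integrableOn_Ioi a hb).const_mul C) hm ?_
  filter_upwards [ae_restrict_mem measurableSet_Ioi] with z hz using hbd z hz

lemma summable_P (P : ℕ → ℝ) (hPnonneg : ∀ k, 0 ≤ P k) (hPsum : ∑' k, P k = 1) :
    Summable P := by
  by_contra h
  rw [tsum_eq_zero_of_not_summable h] at hPsum
  norm_num at hPsum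

lemma summable_aux (P : ℕ → ℝ) (hPnonneg : ∀ k, 0 ≤ P k) (hPsum : ∑' k, P k = 1) (z : ℝ) :
    Summable fun k : ℕ => P (k + 2) * z ^ k / (Nat.factorial k : ℝ) := by
  have hs := summable_P P hPnonneg hPsum
  have hP1 : ∀ k, P k ≤ 1 := fun k =>
    (Summable.le_tsum hs k fun j _ => hPnonneg j).trans_eq hPsum
  apply Summable.of_norm
  refine Summable.of_nonneg_of_le (fun k => norm_nonneg _) ?_
    (Real.summable_pow_div_factorial |z|)
  intro k
  have h1 : (0:ℝ) < (Nat.factorial k : ℝ) := by positivity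
  rw [norm_div, norm_mul, Real.norm_eq_abs, Real.norm_eq_abs, Real.norm_eq_abs, abs_pow,
    abs_of_nonneg (hPnonneg _), abs_of_nonneg h1.le]
  have h2 : P (k + 2) * |z| ^ k ≤ 1 * |z| ^ k := by
    have := hP1 (k + 2)
    have := hPnonneg (k + 2)
    have hz : (0:ℝ) ≤ |z| ^ k := by positivity
    nlinarith
  rw [one_mul] at h2
  exact div_le_div_of_nonneg_right h2 h1.le

lemma g2_measurable (P : ℕ → ℝ) (hPnonneg : ∀ k, 0 ≤ P k) (hPsum : ∑' k, P k = 1) :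
    Measurable (g2 P) := by
  have hlim : Tendsto (fun n (x : ℝ) =>
      Real.exp (-x) * ∑ k ∈ Finset.range n, P (k + 2) * x ^ k / (Nat.factorial k : ℝ))
      atTop (𝓝 (g2 P)) := by
    rw [tendsto_pi_nhds]
    intro x
    exact ((summable_aux P hPnonneg hPsum x).hasSum.tendsto_sum_nat).const_mul _
  refine measurable_of_tendsto_metrizable' atTop (fun n => ?_) hlim
  exact (measurable_id.neg.exp).mul (by measurability)

lemma g2_nonneg (P : ℕ → ℝ) (hPnonneg : ∀ k, 0 ≤ P k) {z : ℝ} (hz : 0 ≤ z) :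
    0 ≤ g2 P z :=
  mul_nonneg (Real.exp_pos _).le (tsum_nonneg fun k =>
    div_nonneg (mul_nonneg (hPnonneg _) (pow_nonneg hz _)) (by positivity))

lemma g2_le (P : ℕ → ℝ) (hPnonneg : ∀ k, 0 ≤ P k) (hPsum : ∑' k, P k = 1)
    {θ : ℝ} (hθ : 0 < θ) (hMθ : Summable fun k : ℕ => P k * Real.exp (θ * k))
    {z : ℝ} (hz : 0 ≤ z) :
    g2 P z ≤ (∑' k : ℕ, P k * Real.exp (θ * k)) *
      Real.exp (-(1 - Real.exp (-θ)) * z) := by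
  set M := ∑' k : ℕ, P k * Real.exp (θ * k) with hM
  have hM0 : 0 ≤ M := tsum_nonneg fun k => mul_nonneg (hPnonneg k) (Real.exp_pos _).le
  have hPk : ∀ k : ℕ, P (k + 2) ≤ M * Real.exp (-θ) ^ k := by
    intro k
    have h1 : P (k + 2) * Real.exp (θ * ((k : ℝ) + 2)) ≤ M := by
      have := Summable.le_tsum hMθ (k + 2) fun j _ => mul_nonneg (hPnonneg j) (Real.exp_pos _).le
      push_cast at this ⊢
      exact this
    have h2 : P (k + 2) ≤ M * Real.exp (-(θ * ((k : ℝ) + 2))) := by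
      have e1 : P (k + 2) = P (k + 2) * Real.exp (θ * ((k : ℝ) + 2)) *
          Real.exp (-(θ * ((k : ℝ) + 2))) := by
        rw [mul_assoc, ← Real.exp_add]; simp
      rw [e1]
      exact mul_le_mul_of_nonneg_right h1 (Real.exp_pos _).le
    refine h2.trans ?_
    rw [← Real.exp_nat_mul]
    have : -(θ * ((k : ℝ) + 2)) ≤ (k : ℝ) * (-θ) := by nlinarith [Nat.cast_nonneg (α := ℝ) k]
    exact mul_le_mul_of_nonneg_left (Real.exp_le_exp.2 this) hM0
  have hsum2 : Summable fun k : ℕ => M * ((Real.exp (-θ) * z) ^ k / (Nat.factorial k : ℝ)) :=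
    (Real.summable_pow_div_factorial _).mul_left M
  have hle : (∑' k : ℕ, P (k + 2) * z ^ k / (Nat.factorial k : ℝ)) ≤
      ∑' k : ℕ, M * ((Real.exp (-θ) * z) ^ k / (Nat.factorial k : ℝ)) := by
    refine Summable.tsum_le_tsum (fun k => ?_) (summable_aux P hPnonneg hPsum z) hsum2
    have h3 : (0:ℝ) ≤ z ^ k / (Nat.factorial k : ℝ) := by positivity
    calc P (k + 2) * z ^ k / (Nat.factorial k : ℝ)
        = P (k + 2) * (z ^ k / (Nat.factorial k : ℝ)) := by ring
      _ ≤ M * Real.exp (-θ) ^ k * (z ^ k / (Nat.factorial k : ℝ)) :=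
          mul_le_mul_of_nonneg_right (hPk k) h3
      _ = M * ((Real.exp (-θ) * z) ^ k / (Nat.factorial k : ℝ)) := by
          rw [mul_pow]; ring
  have hexp : ∑' k : ℕ, ((Real.exp (-θ) * z) ^ k / (Nat.factorial k : ℝ)) =
      Real.exp (Real.exp (-θ) * z) := by
    rw [Real.exp_eq_exp_ℝ, NormedSpace.exp_eq_tsum_div]
  calc g2 P z ≤ Real.exp (-z) * (M * Real.exp (Real.exp (-θ) * z)) := by
        rw [g2]
        refine mul_le_mul_of_nonneg_left ?_ (Real.exp_pos _).le
        rw [show M * Real.exp (Real.exp (-θ) * z) = ∑' k : ℕ,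
          M * ((Real.exp (-θ) * z) ^ k / (Nat.factorial k : ℝ)) by rw [tsum_mul_left, hexp]]
        exact hle
    _ = M * Real.exp (-(1 - Real.exp (-θ)) * z) := by
        rw [show -(1 - Real.exp (-θ)) * z = -z + Real.exp (-θ) * z by ring, Real.exp_add]
        ring


lemma aesm_of_antitoneOn {f : ℝ → ℝ} (hf : AntitoneOn f (Ici 0)) :
    AEStronglyMeasurable f (volume.restrict (Ioi (0:ℝ))) := by
  have hE : Antitone fun x => f (max x 0) := fun a b hab =>
    hf (le_max_right a 0) (le_max_right b 0) (max_le_max hab le_rfl)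
  refine hE.measurable.aestronglyMeasurable.congr ?_
  rw [EventuallyEq, ae_restrict_iff' measurableSet_Ioi]
  exact ae_of_all _ fun x hx => by rw [max_eq_left hx.le]

lemma Gfun_props (P : ℕ → ℝ) (hPnonneg : ∀ k, 0 ≤ P k) (hPsum : ∑' k, P k = 1)
    {M δ : ℝ} (hM : 0 ≤ M) (hδ : 0 < δ)
    (hg2 : ∀ z : ℝ, 0 ≤ z → g2 P z ≤ M * Real.exp (-δ * z)) :
    ∀ i : ℕ, (∀ x : ℝ, 0 ≤ x → 0 ≤ Gfun P i x ∧
        Gfun P i x ≤ (M / δ ^ 2) ^ i / ((Nat.factorial i : ℝ)) ^ 2 *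
          Real.exp (-((i : ℝ) * δ) * x)) ∧
      AntitoneOn (Gfun P i) (Ici 0) := by
  intro i
  induction i with
  | zero =>
      constructor
      · intro x hx
        simp [Gfun]
      · intro a _ b _ _
        simp [Gfun]
  | succ i ih =>
      obtain ⟨hbd, hanti⟩ := ih
      set ci : ℝ := (M / δ ^ 2) ^ i / ((Nat.factorial i : ℝ)) ^ 2 with hci_def
      have hci : 0 ≤ ci := by positivity
      set b : ℝ := ((i : ℝ) + 1) * δ with hb_def
      have hb : 0 < b := by positivity
      set f : ℝ → ℝ := fun z => g2 P z * Gfun P i z with hf_def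
      -- pointwise bounds on f
      have hfnn : ∀ z : ℝ, 0 ≤ z → 0 ≤ f z := fun z hz =>
        mul_nonneg (g2_nonneg P hPnonneg hz) (hbd z hz).1
      have hfle : ∀ z : ℝ, 0 ≤ z → f z ≤ M * ci * Real.exp (-b * z) := by
        intro z hz
        have h1 := hg2 z hz
        have h2 := (hbd z hz).2
        have h3 : f z ≤ M * Real.exp (-δ * z) * (ci * Real.exp (-((i : ℝ) * δ) * z)) :=
          mul_le_mul h1 h2 (hbd z hz).1 (by positivity)
        refine h3.trans_eq ?_
        rw [show M * Real.exp (-δ * z) * (ci * Real.exp (-((i : ℝ) * δ) * z)) =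
          M * ci * (Real.exp (-δ * z) * Real.exp (-((i : ℝ) * δ) * z)) by ring,
          ← Real.exp_add]
        congr 2
        ring
      -- measurability of f
      have hfm : AEStronglyMeasurable f (volume.restrict (Ioi (0:ℝ))) :=
        ((g2_measurable P hPnonneg hPsum).aestronglyMeasurable).mul (aesm_of_antitoneOn hanti)
      have hfm' : ∀ y : ℝ, 0 ≤ y → AEStronglyMeasurable f (volume.restrict (Ioi y)) :=
        fun y hy => hfm.mono_measure (Measure.restrict_mono (Ioi_subset_Ioi hy) le_rfl)
      have hfint : ∀ y : ℝ, 0 ≤ y → IntegrableOn f (Ioi y) := by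
        intro y hy
        refine intOn_of_bound (C := M * ci) hb (hfm' y hy) fun z hz => ?_
        have hz0 : (0:ℝ) ≤ z := hy.trans (le_of_lt hz)
        rw [Real.norm_eq_abs, abs_of_nonneg (hfnn z hz0)]
        exact hfle z hz0
      set F : ℝ → ℝ := fun y => ∫ z in Ioi y, f z with hF_def
      have hFnn : ∀ y : ℝ, 0 ≤ y → 0 ≤ F y := fun y hy =>
        setIntegral_nonneg measurableSet_Ioi fun z hz => hfnn z (hy.trans (le_of_lt hz))
      have hFle : ∀ y : ℝ, 0 ≤ y → F y ≤ M * ci / b * Real.exp (-b * y) := by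
        intro y hy
        have h1 : F y ≤ ∫ z in Ioi y, M * ci * Real.exp (-b * z) := by
          refine integral_mono_of_nonneg ?_ ((exp_neg_integrableOn_Ioi y hb).const_mul (M * ci)) ?_
          · filter_upwards [ae_restrict_mem measurableSet_Ioi] with z hz
            exact hfnn z (hy.trans (le_of_lt hz))
          · filter_upwards [ae_restrict_mem measurableSet_Ioi] with z hz
            exact hfle z (hy.trans (le_of_lt hz))
        refine h1.trans_eq ?_
        rw [MeasureTheory.integral_const_mul, integral_exp_neg_mul_Ioi hb]
        ring
      have hFanti : AntitoneOn F (Ici 0) := by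
        intro a ha c hc hac
        refine setIntegral_mono_set (hfint a ha) ?_ (HasSubset.Subset.eventuallyLE (Ioi_subset_Ioi hac))
        filter_upwards [ae_restrict_mem measurableSet_Ioi] with z hz
        exact hfnn z (le_trans ha (le_of_lt hz))
      have hFm : ∀ x : ℝ, 0 ≤ x → AEStronglyMeasurable F (volume.restrict (Ioi x)) :=
        fun x hx => (aesm_of_antitoneOn hFanti).mono_measure
          (Measure.restrict_mono (Ioi_subset_Ioi hx) le_rfl)
      have hFint : ∀ x : ℝ, 0 ≤ x → IntegrableOn F (Ioi x) := by
        intro x hx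
        refine intOn_of_bound (C := M * ci / b) hb (hFm x hx) fun y hy => ?_
        have hy0 : (0:ℝ) ≤ y := hx.trans (le_of_lt hy)
        rw [Real.norm_eq_abs, abs_of_nonneg (hFnn y hy0)]
        exact hFle y hy0
      have hG1 : ∀ x, Gfun P (i + 1) x = ∫ y in Ioi x, F y := fun x => rfl
      have hGnn : ∀ x : ℝ, 0 ≤ x → 0 ≤ Gfun P (i + 1) x := by
        intro x hx
        rw [hG1]
        exact setIntegral_nonneg measurableSet_Ioi fun y hy => hFnn y (hx.trans (le_of_lt hy))
      refine ⟨fun x hx => ⟨hGnn x hx, ?_⟩, ?_⟩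
      · rw [hG1]
        have h1 : (∫ y in Ioi x, F y) ≤ ∫ y in Ioi x, M * ci / b * Real.exp (-b * y) := by
          refine integral_mono_of_nonneg ?_ ((exp_neg_integrableOn_Ioi x hb).const_mul (M * ci / b)) ?_
          · filter_upwards [ae_restrict_mem measurableSet_Ioi] with y hy
            exact hFnn y (hx.trans (le_of_lt hy))
          · filter_upwards [ae_restrict_mem measurableSet_Ioi] with y hy
            exact hFle y (hx.trans (le_of_lt hy))
        refine h1.trans_eq ?_
        rw [MeasureTheory.integral_const_mul, integral_exp_neg_mul_Ioi hb]
        have hfac : ((Nat.factorial (i + 1) : ℝ)) = ((i : ℝ) + 1) * (Nat.factorial i : ℝ) := by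
          rw [Nat.factorial_succ]; push_cast; ring
        have hexp : Real.exp (-b * x) = Real.exp (-(((i : ℕ) + 1 : ℕ) : ℝ) * δ * x) := by
          congr 1
          push_cast [hb_def]
          ring
        rw [hci_def, hfac]
        push_cast
        rw [hb_def]
        have hfac0 : (Nat.factorial i : ℝ) ≠ 0 := by positivity
        have hδ0 : δ ≠ 0 := ne_of_gt hδ
        have hi10 : ((i : ℝ) + 1) ≠ 0 := by positivity
        field_simp
        have hdd : δ ^ 2 * δ⁻¹ ^ 2 = 1 := by rw [← mul_pow, mul_inv_cancel₀ hδ0, one_pow]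
        linear_combination (-(M * M ^ i * δ⁻¹ ^ (i * 2))) * hdd
      · intro a ha c hc hac
        rw [hG1, hG1]
        refine setIntegral_mono_set (hFint a ha) ?_ (HasSubset.Subset.eventuallyLE (Ioi_subset_Ioi hac))
        filter_upwards [ae_restrict_mem measurableSet_Ioi] with y hy
        exact hFnn y (le_trans ha (le_of_lt hy))


lemma summable_ci {K ρ : ℝ} (hK : 0 ≤ K) (hρ : 0 ≤ ρ) :
    Summable fun i : ℕ => K ^ i / ((Nat.factorial i : ℝ)) ^ 2 * ρ ^ i := by
  refine Summable.of_nonneg_of_le (fun i => by positivity) (fun i => ?_)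
    (Real.summable_pow_div_factorial (K * ρ))
  have h1 : (1:ℝ) ≤ (Nat.factorial i : ℝ) := by exact_mod_cast i.factorial_pos
  have h2 : (Nat.factorial i : ℝ) ≤ ((Nat.factorial i : ℝ)) ^ 2 := by nlinarith
  calc K ^ i / ((Nat.factorial i : ℝ)) ^ 2 * ρ ^ i
      = (K * ρ) ^ i / ((Nat.factorial i : ℝ)) ^ 2 := by rw [mul_pow]; ring
    _ ≤ (K * ρ) ^ i / (Nat.factorial i : ℝ) := by
        apply div_le_div_of_nonneg_left ?_ (by positivity) h2
        positivity


end Stmt11Aux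

set_option maxHeartbeats 1000000 in
theorem stmt_11 (P : ℕ → ℝ)
    (hP0 : P 0 = 0) (hPnonneg : ∀ k, 0 ≤ P k) (hPsum : ∑' k, P k = 1)
    (hPmean : Summable fun k : ℕ => (k : ℝ) * P k) (hP1 : P 1 < 1)
    (θ : ℝ) (hθ : 0 < θ)
    (hMθ : Summable fun k : ℕ => P k * Real.exp (θ * k))
    (β₀ : ℝ) (hβ₀pos : 0 < β₀) (hL0 : Lfun P β₀ 0 = 0)
    (hLnn : ∀ x : ℝ, 0 ≤ x → 0 ≤ Lfun P β₀ x)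
    (hLpos : ∀ β : ℝ, β₀ < β → ∀ x : ℝ, 0 ≤ x → 0 < Lfun P β x) :
    ∀ x : ℝ, 0 ≤ x →
      β₀ * Lfun P β₀ x = (∫ y in Ioc (0 : ℝ) x, ∫ z in Ioi y, g2 P z * Lfun P β₀ z) ∧
      β₀ * Lfun P β₀ x = ∫ z in Ioi (0 : ℝ), min x z * g2 P z * Lfun P β₀ z := by
  intro x hx
  classical
  set r : ℝ := -1 / β₀ with hr
  have hβ0 : β₀ ≠ 0 := ne_of_gt hβ₀pos
  set M : ℝ := ∑' k : ℕ, P k * Real.exp (θ * k) with hMdef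
  have hM0 : 0 ≤ M := tsum_nonneg fun k => mul_nonneg (hPnonneg k) (Real.exp_pos _).le
  set δ : ℝ := 1 - Real.exp (-θ) with hδdef
  have hδ : 0 < δ := by
    have : Real.exp (-θ) < 1 := Real.exp_lt_one_iff.2 (by linarith)
    simp only [hδdef]; linarith
  have hg2le : ∀ z : ℝ, 0 ≤ z → g2 P z ≤ M * Real.exp (-δ * z) := fun z hz =>
    Stmt11Aux.g2_le P hPnonneg hPsum hθ hMθ hz
  have hg2m := Stmt11Aux.g2_measurable P hPnonneg hPsum
  have hg2nn : ∀ z : ℝ, 0 ≤ z → 0 ≤ g2 P z := fun z hz => Stmt11Aux.g2_nonneg P hPnonneg hz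
  have hGp := Stmt11Aux.Gfun_props P hPnonneg hPsum hM0 hδ hg2le
  set K : ℝ := M / δ ^ 2 with hKdef
  have hK0 : 0 ≤ K := by positivity
  set c : ℕ → ℝ := fun i => K ^ i / ((Nat.factorial i : ℝ)) ^ 2 with hcdef
  have hc0 : ∀ i, 0 ≤ c i := fun i => by simp only [hcdef]; positivity
  have hGnn : ∀ i, ∀ z : ℝ, 0 ≤ z → 0 ≤ Gfun P i z := fun i z hz => ((hGp i).1 z hz).1
  have hGle : ∀ i, ∀ z : ℝ, 0 ≤ z → Gfun P i z ≤ c i := by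
    intro i z hz
    refine (((hGp i).1 z hz).2).trans ?_
    have h1 : Real.exp (-((i : ℝ) * δ) * z) ≤ 1 := by
      rw [Real.exp_le_one_iff]
      have : (0:ℝ) ≤ (i : ℝ) * δ * z := by positivity
      linarith
    exact mul_le_of_le_one_right (hc0 i) h1
  have hGm : ∀ i, AEStronglyMeasurable (Gfun P i) (volume.restrict (Ioi (0:ℝ))) :=
    fun i => Stmt11Aux.aesm_of_antitoneOn (hGp i).2
  -- summability facts
  have hcs : Summable fun i : ℕ => c i * |r| ^ i := by
    simpa only [hcdef, mul_comm] using
      (Stmt11Aux.summable_ci hK0 (abs_nonneg r)) |>.congr fun i => by ring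
  have habs : ∀ z : ℝ, 0 ≤ z → ∀ i : ℕ, ‖Gfun P i z * r ^ i‖ ≤ c i * |r| ^ i := by
    intro z hz i
    rw [norm_mul, norm_pow, Real.norm_eq_abs, Real.norm_eq_abs,
      abs_of_nonneg (hGnn i z hz)]
    exact mul_le_mul_of_nonneg_right (hGle i z hz) (by positivity)
  have hLsumnorm : ∀ z : ℝ, 0 ≤ z → Summable fun i : ℕ => ‖Gfun P i z * r ^ i‖ :=
    fun z hz => Summable.of_nonneg_of_le (fun i => norm_nonneg _) (habs z hz) hcs
  have hLsum : ∀ z : ℝ, 0 ≤ z → Summable fun i : ℕ => Gfun P i z * r ^ i :=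
    fun z hz => (hLsumnorm z hz).of_norm
  set CL : ℝ := ∑' i : ℕ, c i * |r| ^ i with hCLdef
  have hCL0 : 0 ≤ CL := tsum_nonneg fun i => by positivity
  have hLdef : ∀ z : ℝ, Lfun P β₀ z = ∑' i : ℕ, Gfun P i z * r ^ i := fun z => rfl
  have hLbd : ∀ z : ℝ, 0 ≤ z → |Lfun P β₀ z| ≤ CL := by
    intro z hz
    rw [hLdef]
    calc |∑' i : ℕ, Gfun P i z * r ^ i| ≤ ∑' i : ℕ, ‖Gfun P i z * r ^ i‖ := by
          simpa using norm_tsum_le_tsum_norm (hLsumnorm z hz)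
      _ ≤ CL := Summable.tsum_le_tsum (habs z hz) (hLsumnorm z hz) hcs
  have hLm : AEStronglyMeasurable (Lfun P β₀) (volume.restrict (Ioi (0:ℝ))) := by
    refine aestronglyMeasurable_of_tendsto_ae atTop
      (f := fun n x => ∑ i ∈ Finset.range n, Gfun P i x * r ^ i) (fun n => ?_) ?_
    · exact Finset.aestronglyMeasurable_fun_sum _ fun i _ => (hGm i).mul_const _
    · filter_upwards [ae_restrict_mem measurableSet_Ioi] with z hz
      rw [hLdef]
      exact (hLsum z (le_of_lt hz)).hasSum.tendsto_sum_nat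
  -- fL and Φ
  set fL : ℝ → ℝ := fun z => g2 P z * Lfun P β₀ z with hfLdef
  have hfLm : ∀ a : ℝ, 0 ≤ a → AEStronglyMeasurable fL (volume.restrict (Ioi a)) := by
    intro a ha
    exact ((hg2m.aestronglyMeasurable).mul hLm).mono_measure
      (Measure.restrict_mono (Ioi_subset_Ioi ha) le_rfl)
  have hfLnn : ∀ z : ℝ, 0 ≤ z → 0 ≤ fL z := fun z hz =>
    mul_nonneg (hg2nn z hz) (hLnn z hz)
  have hfLbd : ∀ z : ℝ, 0 ≤ z → ‖fL z‖ ≤ M * CL * Real.exp (-δ * z) := by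
    intro z hz
    rw [Real.norm_eq_abs, hfLdef, abs_mul, abs_of_nonneg (hg2nn z hz)]
    calc g2 P z * |Lfun P β₀ z| ≤ M * Real.exp (-δ * z) * CL :=
          mul_le_mul (hg2le z hz) (hLbd z hz) (abs_nonneg _) (by positivity)
      _ = M * CL * Real.exp (-δ * z) := by ring
  have hfLint : ∀ a : ℝ, 0 ≤ a → IntegrableOn fL (Ioi a) := by
    intro a ha
    exact Stmt11Aux.intOn_of_bound (C := M * CL) hδ (hfLm a ha) fun z hz =>
      hfLbd z (ha.trans (le_of_lt hz))
  set Φ : ℝ → ℝ := fun y => ∫ z in Ioi y, fL z with hΦdef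
  have hΦnn : ∀ y : ℝ, 0 ≤ y → 0 ≤ Φ y := fun y hy =>
    setIntegral_nonneg measurableSet_Ioi fun z hz => hfLnn z (hy.trans (le_of_lt hz))
  have hΦbd : ∀ y : ℝ, 0 ≤ y → Φ y ≤ M * CL / δ * Real.exp (-δ * y) := by
    intro y hy
    have h1 : Φ y ≤ ∫ z in Ioi y, M * CL * Real.exp (-δ * z) := by
      refine integral_mono_of_nonneg ?_ ((exp_neg_integrableOn_Ioi y hδ).const_mul (M * CL)) ?_
      · filter_upwards [ae_restrict_mem measurableSet_Ioi] with z hz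
        exact hfLnn z (hy.trans (le_of_lt hz))
      · filter_upwards [ae_restrict_mem measurableSet_Ioi] with z hz
        have := hfLbd z (hy.trans (le_of_lt hz))
        rw [Real.norm_eq_abs] at this
        exact (le_abs_self _).trans this
    refine h1.trans_eq ?_
    rw [MeasureTheory.integral_const_mul, Stmt11Aux.integral_exp_neg_mul_Ioi hδ]
    ring
  have hΦanti : AntitoneOn Φ (Ici 0) := by
    intro a ha b hb hab
    refine setIntegral_mono_set (hfLint a ha) ?_
      (HasSubset.Subset.eventuallyLE (Ioi_subset_Ioi hab))
    filter_upwards [ae_restrict_mem measurableSet_Ioi] with z hz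
    exact hfLnn z (le_trans ha (le_of_lt hz))
  have hΦint : ∀ a : ℝ, 0 ≤ a → IntegrableOn Φ (Ioi a) := by
    intro a ha
    refine Stmt11Aux.intOn_of_bound (C := M * CL / δ) hδ
      ((Stmt11Aux.aesm_of_antitoneOn hΦanti).mono_measure
        (Measure.restrict_mono (Ioi_subset_Ioi ha) le_rfl)) fun y hy => ?_
    have hy0 : (0:ℝ) ≤ y := ha.trans (le_of_lt hy)
    rw [Real.norm_eq_abs, abs_of_nonneg (hΦnn y hy0)]
    exact hΦbd y hy0
  -- Fi functions
  set fG : ℕ → ℝ → ℝ := fun i z => g2 P z * Gfun P i z with hfGdef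
  have hfGnn : ∀ i, ∀ z : ℝ, 0 ≤ z → 0 ≤ fG i z := fun i z hz =>
    mul_nonneg (hg2nn z hz) (hGnn i z hz)
  have hfGbd : ∀ i, ∀ z : ℝ, 0 ≤ z → ‖fG i z‖ ≤ M * c i * Real.exp (-δ * z) := by
    intro i z hz
    rw [Real.norm_eq_abs, abs_of_nonneg (hfGnn i z hz)]
    calc fG i z ≤ M * Real.exp (-δ * z) * c i :=
          mul_le_mul (hg2le z hz) (hGle i z hz) (hGnn i z hz) (by positivity)
      _ = M * c i * Real.exp (-δ * z) := by ring
  have hfGm : ∀ i, ∀ a : ℝ, 0 ≤ a → AEStronglyMeasurable (fG i) (volume.restrict (Ioi a)) := by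
    intro i a ha
    exact ((hg2m.aestronglyMeasurable).mul (hGm i)).mono_measure
      (Measure.restrict_mono (Ioi_subset_Ioi ha) le_rfl)
  have hfGint : ∀ i, ∀ a : ℝ, 0 ≤ a → IntegrableOn (fG i) (Ioi a) := by
    intro i a ha
    exact Stmt11Aux.intOn_of_bound (C := M * c i) hδ (hfGm i a ha) fun z hz =>
      hfGbd i z (ha.trans (le_of_lt hz))
  set Fi : ℕ → ℝ → ℝ := fun i y => ∫ z in Ioi y, fG i z with hFidef
  have hFinn : ∀ i, ∀ y : ℝ, 0 ≤ y → 0 ≤ Fi i y := fun i y hy =>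
    setIntegral_nonneg measurableSet_Ioi fun z hz => hfGnn i z (hy.trans (le_of_lt hz))
  have hFibd : ∀ i, ∀ y : ℝ, 0 ≤ y → Fi i y ≤ M * c i / δ * Real.exp (-δ * y) := by
    intro i y hy
    have h1 : Fi i y ≤ ∫ z in Ioi y, M * c i * Real.exp (-δ * z) := by
      refine integral_mono_of_nonneg ?_ ((exp_neg_integrableOn_Ioi y hδ).const_mul (M * c i)) ?_
      · filter_upwards [ae_restrict_mem measurableSet_Ioi] with z hz
        exact hfGnn i z (hy.trans (le_of_lt hz))
      · filter_upwards [ae_restrict_mem measurableSet_Ioi] with z hz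
        have := hfGbd i z (hy.trans (le_of_lt hz))
        rw [Real.norm_eq_abs] at this
        exact (le_abs_self _).trans this
    refine h1.trans_eq ?_
    rw [MeasureTheory.integral_const_mul, Stmt11Aux.integral_exp_neg_mul_Ioi hδ]
    ring
  have hFianti : ∀ i, AntitoneOn (Fi i) (Ici 0) := by
    intro i a ha b hb hab
    refine setIntegral_mono_set (hfGint i a ha) ?_
      (HasSubset.Subset.eventuallyLE (Ioi_subset_Ioi hab))
    filter_upwards [ae_restrict_mem measurableSet_Ioi] with z hz
    exact hfGnn i z (le_trans ha (le_of_lt hz))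
  have hFiint : ∀ i, ∀ a : ℝ, 0 ≤ a → IntegrableOn (Fi i) (Ioi a) := by
    intro i a ha
    refine Stmt11Aux.intOn_of_bound (C := M * c i / δ) hδ
      ((Stmt11Aux.aesm_of_antitoneOn (hFianti i)).mono_measure
        (Measure.restrict_mono (Ioi_subset_Ioi ha) le_rfl)) fun y hy => ?_
    have hy0 : (0:ℝ) ≤ y := ha.trans (le_of_lt hy)
    rw [Real.norm_eq_abs, abs_of_nonneg (hFinn i y hy0)]
    exact hFibd i y hy0
  -- inner swap
  have inner_swap : ∀ y : ℝ, 0 ≤ y → Φ y = ∑' i : ℕ, Fi i y * r ^ i := by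
    intro y hy
    have h1 : ∀ i : ℕ, Integrable (fun z => fG i z * r ^ i) (volume.restrict (Ioi y)) :=
      fun i => (hfGint i y hy).mul_const _
    have h2 : Summable fun i : ℕ => ∫ z in Ioi y, ‖fG i z * r ^ i‖ := by
      refine Summable.of_nonneg_of_le (fun i => integral_nonneg fun z => norm_nonneg _)
        (fun i => ?_) (((hcs.mul_left M).mul_right (Real.exp (-δ * y) / δ)))
      have h3 : (∫ z in Ioi y, ‖fG i z * r ^ i‖) ≤
          ∫ z in Ioi y, M * c i * |r| ^ i * Real.exp (-δ * z) := by
        refine integral_mono_of_nonneg (ae_of_all _ fun z => norm_nonneg _)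
          ((exp_neg_integrableOn_Ioi y hδ).const_mul _) ?_
        filter_upwards [ae_restrict_mem measurableSet_Ioi] with z hz
        rw [norm_mul, norm_pow, Real.norm_eq_abs (r)]
        calc ‖fG i z‖ * |r| ^ i ≤ M * c i * Real.exp (-δ * z) * |r| ^ i :=
              mul_le_mul_of_nonneg_right (hfGbd i z (hy.trans (le_of_lt hz))) (by positivity)
          _ = M * c i * |r| ^ i * Real.exp (-δ * z) := by ring
      refine h3.trans_eq ?_
      rw [MeasureTheory.integral_const_mul, Stmt11Aux.integral_exp_neg_mul_Ioi hδ]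
      ring
    have h4 := integral_tsum_of_summable_integral_norm h1 h2
    have h5 : ∀ᵐ z ∂(volume.restrict (Ioi y)), fL z = ∑' i : ℕ, fG i z * r ^ i := by
      filter_upwards [ae_restrict_mem measurableSet_Ioi] with z hz
      show g2 P z * Lfun P β₀ z = _
      rw [hLdef z, ← tsum_mul_left]
      exact tsum_congr fun i => (mul_assoc _ _ _).symm
    calc Φ y = ∫ z in Ioi y, ∑' i : ℕ, fG i z * r ^ i := integral_congr_ae h5
      _ = ∑' i : ℕ, ∫ z in Ioi y, fG i z * r ^ i := h4.symm
      _ = ∑' i : ℕ, Fi i y * r ^ i := tsum_congr fun i => by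
            rw [MeasureTheory.integral_mul_const]
  -- outer swap
  have outer_swap : ∀ x' : ℝ, 0 ≤ x' →
      (∫ y in Ioi x', Φ y) = ∑' i : ℕ, Gfun P (i + 1) x' * r ^ i := by
    intro x' hx'
    have h1 : ∀ i : ℕ, Integrable (fun y => Fi i y * r ^ i) (volume.restrict (Ioi x')) :=
      fun i => (hFiint i x' hx').mul_const _
    have h2 : Summable fun i : ℕ => ∫ y in Ioi x', ‖Fi i y * r ^ i‖ := by
      refine Summable.of_nonneg_of_le (fun i => integral_nonneg fun z => norm_nonneg _)
        (fun i => ?_)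
        (((hcs.mul_left (M / δ)).mul_right (Real.exp (-δ * x') / δ)))
      have h3 : (∫ y in Ioi x', ‖Fi i y * r ^ i‖) ≤
          ∫ y in Ioi x', M * c i / δ * |r| ^ i * Real.exp (-δ * y) := by
        refine integral_mono_of_nonneg (ae_of_all _ fun z => norm_nonneg _)
          ((exp_neg_integrableOn_Ioi x' hδ).const_mul _) ?_
        filter_upwards [ae_restrict_mem measurableSet_Ioi] with y hy
        have hy0 : (0:ℝ) ≤ y := hx'.trans (le_of_lt hy)
        rw [norm_mul, norm_pow, Real.norm_eq_abs (r), Real.norm_eq_abs,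
          abs_of_nonneg (hFinn i y hy0)]
        calc Fi i y * |r| ^ i ≤ M * c i / δ * Real.exp (-δ * y) * |r| ^ i :=
              mul_le_mul_of_nonneg_right (hFibd i y hy0) (by positivity)
          _ = M * c i / δ * |r| ^ i * Real.exp (-δ * y) := by ring
      refine h3.trans_eq ?_
      rw [MeasureTheory.integral_const_mul, Stmt11Aux.integral_exp_neg_mul_Ioi hδ]
      ring
    have h4 := integral_tsum_of_summable_integral_norm h1 h2
    have h5 : ∀ᵐ y ∂(volume.restrict (Ioi x')), Φ y = ∑' i : ℕ, Fi i y * r ^ i := by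
      filter_upwards [ae_restrict_mem measurableSet_Ioi] with y hy
      exact inner_swap y (hx'.trans (le_of_lt hy))
    calc (∫ y in Ioi x', Φ y) = ∫ y in Ioi x', ∑' i : ℕ, Fi i y * r ^ i :=
          integral_congr_ae h5
      _ = ∑' i : ℕ, ∫ y in Ioi x', Fi i y * r ^ i := h4.symm
      _ = ∑' i : ℕ, Gfun P (i + 1) x' * r ^ i := by
          refine tsum_congr fun i => ?_
          rw [MeasureTheory.integral_mul_const]
          rfl
  -- L recursion
  have hkey : ∀ x' : ℝ, 0 ≤ x' → β₀ * Lfun P β₀ x' = β₀ - ∫ y in Ioi x', Φ y := by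
    intro x' hx'
    have h0 := Summable.tsum_eq_zero_add (hLsum x' hx')
    have h1 : Lfun P β₀ x' = 1 + r * ∑' i : ℕ, Gfun P (i + 1) x' * r ^ i := by
      rw [hLdef, h0]
      have e0 : Gfun P 0 x' * r ^ 0 = 1 := by simp [Gfun]
      rw [e0]
      congr 1
      rw [← tsum_mul_left]
      exact tsum_congr fun i => by rw [pow_succ]; ring
    rw [h1, outer_swap x' hx', ← outer_swap x' hx', hr]
    field_simp
    ring
  have hD0 : (∫ y in Ioi (0:ℝ), Φ y) = β₀ := by
    have h := hkey 0 le_rfl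
    rw [hL0, mul_zero] at h
    linarith
  have hsplit : (∫ y in Ioi (0:ℝ), Φ y) = (∫ y in Ioc (0:ℝ) x, Φ y) + ∫ y in Ioi x, Φ y := by
    rw [← setIntegral_union (Ioc_disjoint_Ioi le_rfl) measurableSet_Ioi
      ((hΦint 0 le_rfl).mono_set Ioc_subset_Ioi_self) (hΦint x hx),
      Ioc_union_Ioi_eq_Ioi hx]
  have part1 : β₀ * Lfun P β₀ x = ∫ y in Ioc (0:ℝ) x, Φ y := by
    rw [hkey x hx]
    linarith [hsplit, hD0]
  -- Fubini
  have part2 : (∫ y in Ioc (0:ℝ) x, Φ y) =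
      ∫ z in Ioi (0:ℝ), min x z * g2 P z * Lfun P β₀ z := by
    have hmeasset : MeasurableSet {p : ℝ × ℝ | p.1 < p.2} :=
      measurableSet_lt measurable_fst measurable_snd
    have hind : ∀ y ∈ Ioc (0:ℝ) x, Φ y = ∫ z in Ioi (0:ℝ), (Ioi y).indicator fL z := by
      intro y hy
      rw [setIntegral_indicator measurableSet_Ioi,
        inter_eq_self_of_subset_right (Ioi_subset_Ioi hy.1.le)]
    have hswap : (∫ y in Ioc (0:ℝ) x, ∫ z in Ioi (0:ℝ), (Ioi y).indicator fL z)
        = ∫ z in Ioi (0:ℝ), ∫ y in Ioc (0:ℝ) x, (Ioi y).indicator fL z := by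
      apply integral_integral_swap
      have hequncurry : (Function.uncurry fun y z => (Ioi y).indicator fL z) =
          ({p : ℝ × ℝ | p.1 < p.2}).indicator fun p => fL p.2 := by
        funext p
        by_cases h : p.1 < p.2 <;>
          simp [Function.uncurry, indicator, mem_Ioi, h]
      rw [hequncurry]
      haveI : IsFiniteMeasure (volume.restrict (Ioc (0:ℝ) x)) :=
        ⟨by rw [Measure.restrict_apply_univ, Real.volume_Ioc]; exact ENNReal.ofReal_lt_top⟩
      have hint2 : Integrable (fun p : ℝ × ℝ => (1:ℝ) * ‖fL p.2‖)
          ((volume.restrict (Ioc (0:ℝ) x)).prod (volume.restrict (Ioi (0:ℝ)))) :=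
        Integrable.mul_prod (integrable_const 1) (hfLint 0 le_rfl).norm
      refine Integrable.mono' hint2 (((hfLm 0 le_rfl).comp_snd).indicator hmeasset) ?_
      refine ae_of_all _ fun p => ?_
      rw [one_mul]
      exact norm_indicator_le_norm_self _ p
    have hinner : ∀ z ∈ Ioi (0:ℝ),
        (∫ y in Ioc (0:ℝ) x, (Ioi y).indicator fL z) = min x z * g2 P z * Lfun P β₀ z := by
      intro z hz
      have he : ∀ y : ℝ, (Ioi y).indicator fL z = (Iio z).indicator (fun _ => fL z) y := by
        intro y
        by_cases h : y < z <;> simp [indicator, mem_Ioi, mem_Iio, h]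
      rw [show (fun y => (Ioi y).indicator fL z) = fun y => (Iio z).indicator (fun _ => fL z) y
        from funext he]
      rw [setIntegral_indicator measurableSet_Iio, setIntegral_const, smul_eq_mul]
      have hvol : (volume (Ioc (0:ℝ) x ∩ Iio z)).toReal = min x z := by
        rcases lt_or_ge x z with h | h
        · have hss : Ioc (0:ℝ) x ∩ Iio z = Ioc 0 x :=
            inter_eq_self_of_subset_left fun t ht => lt_of_le_of_lt ht.2 h
          rw [hss, Real.volume_Ioc, ENNReal.toReal_ofReal (by linarith), min_eq_left h.le]
          ring
        · have : Ioc (0:ℝ) x ∩ Iio z = Ioo 0 z := by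
            ext t
            simp only [mem_inter_iff, mem_Ioc, mem_Iio, mem_Ioo]
            constructor
            · rintro ⟨⟨h1, _⟩, h3⟩; exact ⟨h1, h3⟩
            · rintro ⟨h1, h2⟩; exact ⟨⟨h1, h2.le.trans h⟩, h2⟩
          rw [this, Real.volume_Ioo, ENNReal.toReal_ofReal (by linarith [hz.out]),
            min_eq_right h]
          ring
      rw [measureReal_def, hvol, hfLdef]
      ring
    calc (∫ y in Ioc (0:ℝ) x, Φ y)
        = ∫ y in Ioc (0:ℝ) x, ∫ z in Ioi (0:ℝ), (Ioi y).indicator fL z :=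
          setIntegral_congr_fun measurableSet_Ioc hind
      _ = ∫ z in Ioi (0:ℝ), ∫ y in Ioc (0:ℝ) x, (Ioi y).indicator fL z := hswap
      _ = ∫ z in Ioi (0:ℝ), min x z * g2 P z * Lfun P β₀ z :=
          setIntegral_congr_fun measurableSet_Ioi hinner
  exact ⟨part1, part1.trans part2⟩
end

section
/- Let p ∈ (0,1). For every integer d ≥ 0, ∑_{m=1}^∞ p·(1−p)^{m−1} · ∫_0^∞ (e^{−x}·x^m/m!) · Bi(d; m, (1−e^{−px})/(px)) dx = (p/(1−p)²)·( 1 − ∑_{m=0}^d ((1−p)/p)^m · e^{−(1−p)/p} / m! ) − (p/(1−p))·[d = 0], where [d = 0] equals 1 if d = 0 and 0 otherwise. -/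
open MeasureTheory Real Set Filter

/-- `Bi(d; m, η) = C(m,d) η^d (1-η)^{m-d}`, which is `0` when `d > m`
(since then `C(m,d) = 0`). -/
noncomputable def Bi (d m : ℕ) (η : ℝ) : ℝ :=
  (m.choose d : ℝ) * η ^ d * (1 - η) ^ (m - d)

open Topology

lemma integrableOn_exp_neg_pow (n : ℕ) :
    IntegrableOn (fun x : ℝ => Real.exp (-x) * x ^ n) (Ioi 0) := by
  have h := Real.GammaIntegral_convergent (s := (n : ℝ) + 1) (by positivity)
  simpa [Real.rpow_natCast] using h

lemma integral_exp_neg_pow (n : ℕ) :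
    ∫ x in Ioi (0:ℝ), Real.exp (-x) * x ^ n = (n.factorial : ℝ) := by
  have h := Real.Gamma_eq_integral (s := (n : ℝ) + 1) (by positivity)
  rw [Real.Gamma_nat_eq_factorial] at h
  rw [h]
  exact setIntegral_congr_fun measurableSet_Ioi fun x hx => by
    rw [show ((n:ℝ) + 1 - 1) = (n:ℝ) by ring, Real.rpow_natCast]

lemma hasSum_Bi (d : ℕ) (t η : ℝ) :
    HasSum (fun n : ℕ => t ^ n / (Nat.factorial n : ℝ) * Bi d n η)
      ((t * η) ^ d / (Nat.factorial d : ℝ) * Real.exp (t * (1 - η))) := by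
  have h0 : HasSum (fun k : ℕ => (t * (1 - η)) ^ k / (Nat.factorial k : ℝ))
      (Real.exp (t * (1 - η))) := by
    rw [Real.exp_eq_exp_ℝ]
    exact NormedSpace.expSeries_div_hasSum_exp (𝔸 := ℝ) _
  have h1 := h0.mul_left ((t * η) ^ d / (Nat.factorial d : ℝ))
  have hinj : Function.Injective (· + d : ℕ → ℕ) := add_left_injective d
  rw [← hinj.hasSum_iff (f := fun n : ℕ => t ^ n / (Nat.factorial n : ℝ) * Bi d n η) ?_]
  · have key : ((fun n : ℕ => t ^ n / (Nat.factorial n : ℝ) * Bi d n η) ∘ (· + d))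
        = fun k : ℕ => (t * η) ^ d / (Nat.factorial d : ℝ) *
            ((t * (1 - η)) ^ k / (Nat.factorial k : ℝ)) := by
      funext k
      show t ^ (k + d) / ((k+d).factorial : ℝ) * Bi d (k+d) η = _
      have hc : ((k + d).choose d : ℝ) * (d.factorial : ℝ) * (k.factorial : ℝ)
          = ((k + d).factorial : ℝ) := by
        exact_mod_cast congrArg Nat.cast
          (by simpa [Nat.add_sub_cancel] using
            Nat.choose_mul_factorial_mul_factorial (Nat.le_add_left d k))
      have hd0 : (d.factorial : ℝ) ≠ 0 := Nat.cast_ne_zero.2 d.factorial_ne_zero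
      have hk0 : (k.factorial : ℝ) ≠ 0 := Nat.cast_ne_zero.2 k.factorial_ne_zero
      have hkd0 : (((k + d).factorial : ℕ) : ℝ) ≠ 0 := Nat.cast_ne_zero.2 (k+d).factorial_ne_zero
      have hch0 : ((k + d).choose d : ℝ) ≠ 0 :=
        Nat.cast_ne_zero.2 (Nat.choose_pos (Nat.le_add_left d k)).ne'
      rw [Bi, Nat.add_sub_cancel, pow_add, ← hc]
      field_simp
      rw [mul_pow η t, mul_pow (1 - η) t]
      ring
    rw [key]
    exact h1
  · intro n hn
    have hnd : n < d := by
      rcases lt_or_ge n d with h | h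
      · exact h
      · exact absurd ⟨n - d, show n - d + d = n by omega⟩ hn
    simp [Bi, Nat.choose_eq_zero_of_lt hnd]

lemma hasSum_term {p : ℝ} (hp : 0 < p) (hp1 : p < 1) (d : ℕ) {x : ℝ} (hx : 0 < x) :
    HasSum (fun m : ℕ => p * (1 - p) ^ m *
        (Real.exp (-x) * x ^ (m + 1) / (Nat.factorial (m + 1) : ℝ) *
          Bi d (m + 1) ((1 - Real.exp (-(p * x))) / (p * x))))
      (p / (1 - p) *
        (Real.exp (-(p * x)) * Real.exp (-((1 - p) / p * (1 - Real.exp (-(p * x))))) *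
            ((1 - p) / p * (1 - Real.exp (-(p * x)))) ^ d / (Nat.factorial d : ℝ) -
          (if d = 0 then 1 else 0) * Real.exp (-x))) := by
  set η := (1 - Real.exp (-(p * x))) / (p * x) with hη
  set t := (1 - p) * x with ht
  set u := (1 - p) / p * (1 - Real.exp (-(p * x))) with hu
  have hpx : p * x ≠ 0 := (mul_pos hp hx).ne'
  have h1p : (0:ℝ) < 1 - p := by linarith
  have htu : t * η = u := by
    rw [ht, hη, hu]
    field_simp
  have hb := hasSum_Bi d t η
  have hb0 : t ^ (0:ℕ) / (Nat.factorial 0 : ℝ) * Bi d 0 η = (if d = 0 then 1 else 0) := by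
    rcases d with _ | d
    · simp [Bi]
    · simp [Bi]
  have h2 : HasSum (fun m : ℕ => t ^ (m+1) / (Nat.factorial (m+1) : ℝ) * Bi d (m+1) η)
      ((t * η) ^ d / (Nat.factorial d : ℝ) * Real.exp (t * (1 - η))
        - (if d = 0 then 1 else 0)) := by
    rw [hasSum_nat_add_iff (f := fun n : ℕ => t ^ n / (Nat.factorial n : ℝ) * Bi d n η) 1]
    simp only [Finset.sum_range_one]
    rw [hb0, sub_add_cancel]
    exact hb
  have h3 := h2.mul_left (p / (1 - p) * Real.exp (-x))
  have hfun : ∀ m : ℕ, (p / (1 - p) * Real.exp (-x)) *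
      (t ^ (m+1) / (Nat.factorial (m+1) : ℝ) * Bi d (m+1) η)
      = p * (1 - p) ^ m * (Real.exp (-x) * x ^ (m + 1) / (Nat.factorial (m + 1) : ℝ)
          * Bi d (m + 1) η) := by
    intro m
    rw [ht, mul_pow]
    have : (((m+1).factorial : ℕ) : ℝ) ≠ 0 := Nat.cast_ne_zero.2 (m+1).factorial_ne_zero
    field_simp
    ring
  have hexp : Real.exp (-x) * Real.exp (t * (1 - η)) = Real.exp (-(p * x)) * Real.exp (-u) := by
    rw [← Real.exp_add, ← Real.exp_add]
    congr 1
    rw [mul_one_sub, htu, ht]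
    ring
  have hval : (p / (1 - p) * Real.exp (-x)) *
      ((t * η) ^ d / (Nat.factorial d : ℝ) * Real.exp (t * (1 - η))
        - (if d = 0 then 1 else 0))
      = p / (1 - p) * (Real.exp (-(p * x)) * Real.exp (-u) * u ^ d / (Nat.factorial d : ℝ)
          - (if d = 0 then 1 else 0) * Real.exp (-x)) := by
    rw [htu]
    linear_combination (p / (1 - p) * u ^ d / (Nat.factorial d : ℝ)) * hexp
  rw [← hval]
  exact h3.congr_fun fun m => (hfun m).symm

lemma sum_deriv_telescope (d : ℕ) (t : ℝ) :
    (∑ j ∈ Finset.range (d+1), t ^ j / (Nat.factorial j : ℝ))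
      - ∑ j ∈ Finset.range (d+1), (j : ℝ) * t ^ (j-1) / (Nat.factorial j : ℝ)
      = t ^ d / (Nat.factorial d : ℝ) := by
  induction d with
  | zero => simp
  | succ d ih =>
    rw [Finset.sum_range_succ _ (d+1), Finset.sum_range_succ _ (d+1)]
    have hd0 : (d.factorial : ℝ) ≠ 0 := Nat.cast_ne_zero.2 d.factorial_ne_zero
    have h : ((d+1 : ℕ) : ℝ) * t ^ (d + 1 - 1) / (((d+1).factorial : ℕ) : ℝ)
        = t ^ d / (d.factorial : ℝ) := by
      rw [Nat.add_sub_cancel, Nat.factorial_succ]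
      push_cast
      field_simp
    rw [h]
    linarith [ih]

lemma hasDerivAt_F (d : ℕ) (t : ℝ) :
    HasDerivAt (fun t : ℝ => -(Real.exp (-t) *
        ∑ j ∈ Finset.range (d+1), t ^ j / (Nat.factorial j : ℝ)))
      (Real.exp (-t) * t ^ d / (Nat.factorial d : ℝ)) t := by
  have h1 : HasDerivAt (fun t : ℝ => Real.exp (-t)) (-Real.exp (-t)) t := by
    simpa using (hasDerivAt_neg t).exp
  have h2 : HasDerivAt (fun t : ℝ => ∑ j ∈ Finset.range (d+1), t ^ j / (Nat.factorial j : ℝ))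
      (∑ j ∈ Finset.range (d+1), (j:ℝ) * t ^ (j-1) / (Nat.factorial j : ℝ)) t := by
    refine HasDerivAt.fun_sum fun j _ => ?_
    simpa using (hasDerivAt_pow j t).div_const (Nat.factorial j : ℝ)
  have h3 := (h1.mul h2).neg
  refine h3.congr_deriv (Eq.symm ?_)
  linear_combination (-Real.exp (-t)) * sum_deriv_telescope d t

lemma integrableOn_g {p : ℝ} (hp : 0 < p) (hp1 : p < 1) (d : ℕ) :
    IntegrableOn (fun x : ℝ =>
      Real.exp (-(p * x)) * Real.exp (-((1 - p) / p * (1 - Real.exp (-(p * x))))) *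
        ((1 - p) / p * (1 - Real.exp (-(p * x)))) ^ d / (Nat.factorial d : ℝ)) (Ioi 0) := by
  set c : ℝ := (1 - p) / p with hcdef
  have h1p : (0:ℝ) < 1 - p := by linarith
  have hc : 0 < c := div_pos h1p hp
  have hmaj : IntegrableOn (fun x : ℝ => c ^ d / (Nat.factorial d : ℝ) * Real.exp (-p * x))
      (Ioi 0) := (exp_neg_integrableOn_Ioi 0 hp).const_mul _
  refine hmaj.mono' ?_ ?_
  · refine Continuous.aestronglyMeasurable ?_
    fun_prop
  · rw [ae_restrict_iff' measurableSet_Ioi]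
    refine Eventually.of_forall fun x hx => ?_
    have hx0 : (0:ℝ) < x := hx
    have he1 : Real.exp (-(p * x)) ≤ 1 := by
      rw [Real.exp_le_one_iff]
      nlinarith
    have he0 : 0 < Real.exp (-(p * x)) := Real.exp_pos _
    have hu0 : 0 ≤ c * (1 - Real.exp (-(p * x))) := by nlinarith
    have huc : c * (1 - Real.exp (-(p * x))) ≤ c := by nlinarith
    have heu : Real.exp (-(c * (1 - Real.exp (-(p * x))))) ≤ 1 := by
      rw [Real.exp_le_one_iff]
      linarith
    rw [Real.norm_eq_abs, abs_of_nonneg (by positivity)]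
    rw [neg_mul]
    have hpow : (c * (1 - Real.exp (-(p * x)))) ^ d ≤ c ^ d :=
      pow_le_pow_left₀ hu0 huc d
    have hd0 : (0:ℝ) < (Nat.factorial d : ℝ) := by positivity
    rw [div_le_iff₀ hd0]  -- maybe easier below
    calc Real.exp (-(p * x)) * Real.exp (-(c * (1 - Real.exp (-(p * x))))) *
          (c * (1 - Real.exp (-(p * x)))) ^ d
        ≤ Real.exp (-(p * x)) * 1 * c ^ d := by
          apply mul_le_mul
          · apply mul_le_mul_of_nonneg_left heu he0.le
          · exact hpow
          · positivity
          · positivity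
      _ = c ^ d * Real.exp (-(p*x)) := by ring
      _ ≤ c ^ d / (Nat.factorial d : ℝ) * Real.exp (-(p * x)) * (Nat.factorial d : ℝ) :=
          le_of_eq (by field_simp)

lemma integral_g {p : ℝ} (hp : 0 < p) (hp1 : p < 1) (d : ℕ) :
    ∫ x in Ioi (0:ℝ),
      Real.exp (-(p * x)) * Real.exp (-((1 - p) / p * (1 - Real.exp (-(p * x))))) *
        ((1 - p) / p * (1 - Real.exp (-(p * x)))) ^ d / (Nat.factorial d : ℝ)
      = (1 / (1 - p)) * (1 - Real.exp (-((1 - p) / p)) *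
          ∑ j ∈ Finset.range (d+1), ((1 - p) / p) ^ j / (Nat.factorial j : ℝ)) := by
  set c : ℝ := (1 - p) / p with hcdef
  have h1p : (0:ℝ) < 1 - p := by linarith
  have hc : 0 < c := div_pos h1p hp
  have hcp : c * p = 1 - p := by
    rw [hcdef]
    field_simp
  set G : ℝ → ℝ := fun x => (1 / (1 - p)) *
      (-(Real.exp (-(c * (1 - Real.exp (-(p * x))))) *
        ∑ j ∈ Finset.range (d+1),
          (c * (1 - Real.exp (-(p * x)))) ^ j / (Nat.factorial j : ℝ))) with hGdef
  have hu : ∀ x : ℝ, HasDerivAt (fun x : ℝ => c * (1 - Real.exp (-(p * x))))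
      (c * (p * Real.exp (-(p * x)))) x := by
    intro x
    have h : HasDerivAt (fun x : ℝ => -(p * x)) (-p) x := by
      exact (((hasDerivAt_id x).const_mul p).neg).congr_deriv (by simp)
    have h3 := (h.exp.const_sub 1).const_mul c
    refine h3.congr_deriv (Eq.symm ?_)
    ring
  have hG : ∀ x : ℝ, HasDerivAt G
      (Real.exp (-(p*x)) * Real.exp (-(c * (1 - Real.exp (-(p * x))))) *
        (c * (1 - Real.exp (-(p * x)))) ^ d / (Nat.factorial d : ℝ)) x := by
    intro x
    have hcomp := (hasDerivAt_F d (c * (1 - Real.exp (-(p * x))))).comp x (hu x)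
    have h4 := hcomp.const_mul (1 / (1 - p))
    have heq : (fun x : ℝ => (1 / (1 - p)) * ((fun t : ℝ => -(Real.exp (-t) *
        ∑ j ∈ Finset.range (d+1), t ^ j / (Nat.factorial j : ℝ))) ∘
          (fun x : ℝ => c * (1 - Real.exp (-(p * x))))) x) = G := by
      funext y
      simp [Function.comp, hGdef]
    rw [heq] at h4
    refine h4.congr_deriv (Eq.symm ?_)
    rw [← hcp]
    field_simp
  have hlim : Tendsto G atTop (𝓝 ((1 / (1 - p)) * (-(Real.exp (-c) *
      ∑ j ∈ Finset.range (d+1), c ^ j / (Nat.factorial j : ℝ))))) := by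
    have h1 : Tendsto (fun x : ℝ => Real.exp (-(p * x))) atTop (𝓝 0) := by
      apply Real.tendsto_exp_atBot.comp
      have h0 : Tendsto (fun x : ℝ => p * x) atTop atTop :=
        Tendsto.const_mul_atTop hp tendsto_id
      exact tendsto_neg_atTop_atBot.comp h0
    have hΦ : Continuous (fun e : ℝ => (1 / (1 - p)) *
        (-(Real.exp (-(c * (1 - e))) *
          ∑ j ∈ Finset.range (d+1), (c * (1 - e)) ^ j / (Nat.factorial j : ℝ)))) := by
      fun_prop
    have h2 := (hΦ.tendsto 0).comp h1
    simpa [Function.comp_def, hGdef] using h2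
  have key := integral_Ioi_of_hasDerivAt_of_tendsto' (f := G) (a := 0)
    (fun x _ => hG x) (integrableOn_g hp hp1 d) hlim
  rw [key]
  have hsum0 : ∑ j ∈ Finset.range (d+1), (0:ℝ) ^ j / (Nat.factorial j : ℝ) = 1 := by
    rw [Finset.sum_eq_single 0]
    · simp
    · intro b _ hb
      simp [zero_pow hb]
    · simp
  have hG0 : G 0 = (1 / (1 - p)) * (-1) := by
    rw [hGdef]
    simp only [mul_zero, neg_zero, Real.exp_zero, sub_self]
    rw [hsum0]
    simp
  rw [hG0]
  ring

-- η ∈ [0,1] for x > 0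
lemma eta_mem {p : ℝ} (hp : 0 < p) {x : ℝ} (hx : 0 < x) :
    0 ≤ (1 - Real.exp (-(p * x))) / (p * x) ∧ (1 - Real.exp (-(p * x))) / (p * x) ≤ 1 := by
  have hpx : 0 < p * x := mul_pos hp hx
  constructor
  · apply div_nonneg _ hpx.le
    have : Real.exp (-(p * x)) ≤ 1 := by
      rw [Real.exp_le_one_iff]; linarith
    linarith
  · rw [div_le_one hpx]
    have := Real.add_one_le_exp (-(p * x))
    linarith

lemma norm_Bi_le {d n : ℕ} {η : ℝ} (h0 : 0 ≤ η) (h1 : η ≤ 1) :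
    ‖Bi d n η‖ ≤ (n : ℝ) ^ d / (Nat.factorial d : ℝ) := by
  have hb : ‖Bi d n η‖ ≤ (n.choose d : ℝ) := by
    rw [Bi, norm_mul, norm_mul, Real.norm_eq_abs, Real.norm_eq_abs, Real.norm_eq_abs]
    rw [abs_of_nonneg (by positivity : (0:ℝ) ≤ (n.choose d : ℝ))]
    have h2 : |η ^ d| ≤ 1 := by
      rw [abs_pow]
      exact pow_le_one₀ (abs_nonneg η) (abs_le.2 ⟨by linarith, h1⟩)
    have h3 : |(1 - η) ^ (n - d)| ≤ 1 := by
      rw [abs_pow]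
      exact pow_le_one₀ (abs_nonneg _) (abs_le.2 ⟨by linarith, by linarith⟩)
    calc (n.choose d : ℝ) * |η ^ d| * |(1 - η) ^ (n - d)|
        ≤ (n.choose d : ℝ) * 1 * 1 := by
          apply mul_le_mul _ h3 (abs_nonneg _) (by positivity)
          exact mul_le_mul_of_nonneg_left h2 (by positivity)
      _ = (n.choose d : ℝ) := by ring
  refine hb.trans ?_
  have := Nat.choose_le_pow_div (α := ℝ) d n
  simpa [Nat.cast_pow] using this

theorem stmt_17 (p : ℝ) (hp : 0 < p) (hp1 : p < 1) (d : ℕ) :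
    (∑' m : ℕ, p * (1 - p) ^ m *
      ∫ x in Ioi (0 : ℝ),
        Real.exp (-x) * x ^ (m + 1) / (Nat.factorial (m + 1) : ℝ) *
          Bi d (m + 1) ((1 - Real.exp (-(p * x))) / (p * x))) =
    (p / (1 - p) ^ 2) *
        (1 - ∑ m ∈ Finset.range (d + 1),
          ((1 - p) / p) ^ m * Real.exp (-((1 - p) / p)) / (Nat.factorial m : ℝ))
      - (p / (1 - p)) * (if d = 0 then 1 else 0) := by
  have h1p : (0:ℝ) < 1 - p := by linarith
  set F : ℕ → ℝ → ℝ := fun m x => p * (1 - p) ^ m *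
      (Real.exp (-x) * x ^ (m + 1) / (Nat.factorial (m + 1) : ℝ) *
        Bi d (m + 1) ((1 - Real.exp (-(p * x))) / (p * x))) with hF
  -- majorant for each m
  set g : ℕ → ℝ → ℝ := fun m x => p * (1 - p) ^ m * (((m:ℝ) + 1) ^ d / (Nat.factorial d : ℝ)) *
      (Real.exp (-x) * x ^ (m + 1) / (Nat.factorial (m + 1) : ℝ)) with hg
  have hg_int : ∀ m, IntegrableOn (g m) (Ioi 0) := by
    intro m
    exact ((integrableOn_exp_neg_pow (m+1)).div_const _).const_mul _
  have hg_val : ∀ m, ∫ x in Ioi (0:ℝ), g m x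
      = p * (1 - p) ^ m * (((m:ℝ) + 1) ^ d / (Nat.factorial d : ℝ)) := by
    intro m
    rw [hg]
    simp only
    rw [integral_const_mul]
    have : ∫ x in Ioi (0:ℝ), Real.exp (-x) * x ^ (m+1) / (Nat.factorial (m+1) : ℝ)
        = 1 := by
      rw [integral_div, integral_exp_neg_pow]
      exact div_self (Nat.cast_ne_zero.2 (m+1).factorial_ne_zero)
    rw [this, mul_one]
  have hFmeas : ∀ m, AEStronglyMeasurable (F m) (volume.restrict (Ioi 0)) := by
    intro m
    apply Measurable.aestronglyMeasurable
    unfold F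
    unfold Bi
    fun_prop
  have hFbound : ∀ m, ∀ x ∈ Ioi (0:ℝ), ‖F m x‖ ≤ g m x := by
    intro m x hx
    have hx0 : (0:ℝ) < x := hx
    obtain ⟨hη0, hη1⟩ := eta_mem hp hx0
    have hBi := norm_Bi_le (d := d) (n := m+1) hη0 hη1
    rw [hF]
    simp only
    rw [norm_mul, norm_mul]
    have e1 : ‖p‖ = p := abs_of_pos hp
    have e2 : ‖(1 - p) ^ m‖ = (1-p)^m := abs_of_pos (pow_pos h1p m)
    have e3 : ‖Real.exp (-x) * x ^ (m + 1) / (Nat.factorial (m + 1) : ℝ)‖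
        = Real.exp (-x) * x ^ (m + 1) / (Nat.factorial (m + 1) : ℝ) := by
      rw [Real.norm_eq_abs, abs_of_nonneg (by positivity)]
    rw [norm_mul, e1, e2, e3, hg]
    simp only
    push_cast at hBi ⊢
    calc p * (1-p)^m * (Real.exp (-x) * x ^ (m + 1) / (Nat.factorial (m + 1) : ℝ) *
          ‖Bi d (m+1) ((1 - Real.exp (-(p * x))) / (p * x))‖)
        ≤ p * (1-p)^m * (Real.exp (-x) * x ^ (m + 1) / (Nat.factorial (m + 1) : ℝ) *
          (((m:ℝ)+1) ^ d / (Nat.factorial d : ℝ))) := by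
          apply mul_le_mul_of_nonneg_left _ (by positivity)
          exact mul_le_mul_of_nonneg_left hBi (by positivity)
      _ = p * (1 - p) ^ m * (((m:ℝ) + 1) ^ d / (Nat.factorial d : ℝ)) *
          (Real.exp (-x) * x ^ (m + 1) / (Nat.factorial (m + 1) : ℝ)) := by ring
  have hFint : ∀ m, Integrable (F m) (volume.restrict (Ioi 0)) := by
    intro m
    refine (hg_int m).mono' (hFmeas m) ?_
    rw [ae_restrict_iff' measurableSet_Ioi]
    exact Eventually.of_forall (hFbound m)
  have hCsum : Summable (fun m : ℕ =>
      p * (1 - p) ^ m * (((m:ℝ) + 1) ^ d / (Nat.factorial d : ℝ))) := by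
    have h := summable_pow_mul_geometric_of_norm_lt_one (R := ℝ) (k := d) (r := 1-p)
      (by rw [Real.norm_eq_abs]; rw [abs_lt]; constructor <;> linarith)
    have h2 := (_root_.summable_nat_add_iff 1).2 h
    have h3 := h2.mul_left (p / (1 - p) / (Nat.factorial d : ℝ))
    refine h3.congr fun m => ?_
    push_cast
    field_simp
    ring
  have hnorm_sum : Summable (fun m : ℕ => ∫ x in Ioi (0:ℝ), ‖F m x‖) := by
    apply Summable.of_nonneg_of_le (fun m => integral_nonneg fun x => norm_nonneg _)
      (fun m => ?_) hCsum
    rw [← hg_val m]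
    apply integral_mono_of_nonneg (Eventually.of_forall fun x => norm_nonneg _) (hg_int m)
    exact (ae_restrict_iff' measurableSet_Ioi).2 (Eventually.of_forall (hFbound m))
  -- swap sum and integral
  have hswap := MeasureTheory.integral_tsum_of_summable_integral_norm hFint hnorm_sum
  have hLHS : (∑' m : ℕ, p * (1 - p) ^ m *
      ∫ x in Ioi (0 : ℝ),
        Real.exp (-x) * x ^ (m + 1) / (Nat.factorial (m + 1) : ℝ) *
          Bi d (m + 1) ((1 - Real.exp (-(p * x))) / (p * x)))
      = ∑' m : ℕ, ∫ x in Ioi (0:ℝ), F m x := by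
    refine tsum_congr fun m => ?_
    rw [hF]
    simp only
    rw [integral_const_mul]
  rw [hLHS, hswap]
  -- pointwise value of the series
  have hptwise : ∫ x in Ioi (0:ℝ), (∑' m, F m x)
      = ∫ x in Ioi (0:ℝ), (p / (1 - p) *
        (Real.exp (-(p * x)) * Real.exp (-((1 - p) / p * (1 - Real.exp (-(p * x))))) *
            ((1 - p) / p * (1 - Real.exp (-(p * x)))) ^ d / (Nat.factorial d : ℝ) -
          (if d = 0 then 1 else 0) * Real.exp (-x))) := by
    refine setIntegral_congr_fun measurableSet_Ioi fun x hx => ?_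
    exact (hasSum_term hp hp1 d hx).tsum_eq
  rw [hptwise]
  have hexp_int : IntegrableOn (fun x : ℝ => (if d = 0 then (1:ℝ) else 0) * Real.exp (-x))
      (Ioi 0) := by
    have := (integrableOn_exp_neg_pow 0).const_mul (if d = 0 then (1:ℝ) else 0)
    simpa [IntegrableOn] using this
  rw [integral_const_mul,
    MeasureTheory.integral_sub (integrableOn_g hp hp1 d) hexp_int,
    integral_const_mul, integral_g hp hp1 d]
  have hexp1 : ∫ x in Ioi (0:ℝ), Real.exp (-x) = 1 := by
    simpa using integral_exp_neg_pow 0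
  rw [hexp1]
  have hsum_eq : ∑ m ∈ Finset.range (d + 1),
      ((1 - p) / p) ^ m * Real.exp (-((1 - p) / p)) / (Nat.factorial m : ℝ)
      = Real.exp (-((1 - p) / p)) *
        ∑ j ∈ Finset.range (d+1), ((1 - p) / p) ^ j / (Nat.factorial j : ℝ) := by
    rw [Finset.mul_sum]
    exact Finset.sum_congr rfl fun j _ => by ring
  rw [hsum_eq]
  have hne : (1:ℝ) - p ≠ 0 := h1p.ne'
  set E := Real.exp (-((1 - p) / p)) *
    ∑ j ∈ Finset.range (d+1), ((1 - p) / p) ^ j / (Nat.factorial j : ℝ) with hE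
  set I := (if d = 0 then (1:ℝ) else 0) with hI
  field_simp
end

section
/- Let p ∈ (0,1) and let P be the geometric distribution P(k) = p·(1−p)^{k−1} for k ≥ 1. Then for every Lebesgue-measurable f : [0,∞) → [0,1], T(f)(x) = (px − 1 + e^{−px})/(px) + (p/x)·∫_0^∞ min(x,z)·exp(−z·(1 − (1−p)·f(z))) dz for every x > 0, and T(f)(0) = p·∫_0^∞ exp(−z·(1 − (1−p)·f(z))) dz. -/
open MeasureTheory Real Set Filter
open scoped Nat

/- ### Auxiliary lemmas -/

lemma exp_tsum (t : ℝ) : ∑' k : ℕ, t ^ k / (k ! : ℝ) = Real.exp t := by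
  rw [Real.exp_eq_exp_ℝ, NormedSpace.exp_eq_tsum_div]

lemma H_integrable (k : ℕ) :
    IntegrableOn (fun z : ℝ => Real.exp (-z) * z ^ k / (k ! : ℝ)) (Ioi 0) := by
  have h := Real.GammaIntegral_convergent (s := (k : ℝ) + 1) (by positivity)
  have h2 : IntegrableOn (fun z : ℝ => Real.exp (-z) * z ^ k) (Ioi 0) := by
    refine h.congr_fun (fun x _ => ?_) measurableSet_Ioi
    simp [Real.rpow_natCast]
  exact h2.div_const _

lemma H_integral (k : ℕ) :
    ∫ z in Ioi (0 : ℝ), Real.exp (-z) * z ^ k / (k ! : ℝ) = 1 := by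
  have h := (Real.Gamma_eq_integral (s := (k : ℝ) + 1) (by positivity)).symm
  have h2 : ∫ z in Ioi (0 : ℝ), Real.exp (-z) * z ^ k = (k ! : ℝ) := by
    rw [show ∫ z in Ioi (0 : ℝ), Real.exp (-z) * z ^ k
        = ∫ z in Ioi (0 : ℝ), Real.exp (-z) * z ^ (((k : ℝ) + 1) - 1) from by
      refine setIntegral_congr_fun measurableSet_Ioi (fun x _ => ?_)
      simp [Real.rpow_natCast], h]
    rw [show ((k:ℝ) + 1) = ((k:ℝ) + 1) from rfl, Real.Gamma_nat_eq_factorial]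
  rw [integral_div, h2, div_self (by positivity)]

lemma ptwB (p q a z : ℝ) :
    ∑' k : ℕ, p * q ^ k * (Real.exp (-z) * z ^ k / (k ! : ℝ) * a ^ k)
      = p * Real.exp (-(z * (1 - q * a))) := by
  have h : ∀ k : ℕ, p * q ^ k * (Real.exp (-z) * z ^ k / (k ! : ℝ) * a ^ k)
      = (p * Real.exp (-z)) * ((q * z * a) ^ k / (k ! : ℝ)) := by
    intro k; rw [mul_pow, mul_pow]; ring
  rw [tsum_congr h, tsum_mul_left, exp_tsum, mul_assoc, ← Real.exp_add]
  rw [show -z + q * z * a = -(z * (1 - q * a)) by ring]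

lemma ptwA (p q z : ℝ) :
    ∑' k : ℕ, p * q ^ k * (Real.exp (-z) * z ^ k / (k ! : ℝ))
      = p * Real.exp (-(z * (1 - q))) := by
  have := ptwB p q 1 z
  simpa using this

lemma lint_le {μ : Measure ℝ} {F B : ℝ → ℝ} (hFB : ∀ᵐ z ∂μ, ‖F z‖ ≤ B z)
    (hB : Integrable B μ) :
    ∫⁻ z, ‖F z‖₊ ∂μ ≤ ENNReal.ofReal (∫ z, B z ∂μ) := by
  rw [ofReal_integral_eq_lintegral_ofReal hB
    (by filter_upwards [hFB] with z hz; exact (norm_nonneg _).trans hz)]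
  refine lintegral_mono_ae (hFB.mono fun z hz => ?_)
  rw [← ENNReal.ofReal_coe_nnreal]
  exact ENNReal.ofReal_le_ofReal hz

lemma my_tsum_integral {μ : Measure ℝ} {F : ℕ → ℝ → ℝ} {C : ℕ → ℝ}
    (hm : ∀ k, AEStronglyMeasurable (F k) μ)
    (hb : ∀ k, ∫⁻ z, ‖F k z‖₊ ∂μ ≤ ENNReal.ofReal (C k))
    (hC : Summable C) (hC0 : ∀ k, 0 ≤ C k) :
    ∑' k, ∫ z, F k z ∂μ = ∫ z, ∑' k, F k z ∂μ := by
  refine (integral_tsum hm ?_).symm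
  refine ne_top_of_le_ne_top ?_ (ENNReal.tsum_le_tsum hb)
  rw [← ENNReal.ofReal_tsum_of_nonneg hC0 hC]
  exact ENNReal.ofReal_ne_top

lemma expderiv (b : ℝ) (hb : b ≠ 0) (y : ℝ) :
    HasDerivAt (fun t => -Real.exp (-(b * t)) / b) (Real.exp (-(b * y))) y := by
  have h1 : HasDerivAt (fun t : ℝ => -(b * t)) (-b) y := by
    have h := (hasDerivAt_id y).const_mul b
    simp only [id, mul_one] at h
    exact h.neg
  have h2 := (Real.hasDerivAt_exp (-(b * y))).comp y h1
  have h3 : HasDerivAt (fun t => -((Real.exp ∘ fun t => -(b * t)) t / b))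
      (-(Real.exp (-(b * y)) * -b / b)) y := (h2.div_const b).neg
  convert h3 using 1
  · funext t; simp [Function.comp, neg_div]
  · rw [mul_neg, neg_div, neg_neg, mul_div_cancel_right₀ _ hb]

lemma int_exp_Ioc (b y : ℝ) (hb : 0 < b) (hy : 0 ≤ y) :
    ∫ z in Ioc (0 : ℝ) y, b * Real.exp (-(b * z)) = 1 - Real.exp (-(b * y)) := by
  rw [← intervalIntegral.integral_of_le hy]
  have hcont : Continuous fun z : ℝ => b * Real.exp (-(b * z)) := by continuity
  have := intervalIntegral.integral_eq_sub_of_hasDerivAt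
    (f := fun t => b * (-Real.exp (-(b * t)) / b))
    (f' := fun z => b * Real.exp (-(b * z)))
    (fun z _ => (expderiv b hb.ne' z).const_mul b)
    (hcont.intervalIntegrable 0 y)
  rw [this]
  field_simp
  simp only [mul_zero, neg_zero, Real.exp_zero]
  ring

lemma int_one_sub_exp (b x : ℝ) (hb : 0 < b) (hx : 0 ≤ x) :
    ∫ y in Ioc (0 : ℝ) x, (1 - Real.exp (-(b * y))) = x - (1 - Real.exp (-(b * x))) / b := by
  rw [← intervalIntegral.integral_of_le hx]
  have hcont : Continuous fun y : ℝ => 1 - Real.exp (-(b * y)) := by continuity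
  have := intervalIntegral.integral_eq_sub_of_hasDerivAt
    (f := fun t => t - -Real.exp (-(b * t)) / b)
    (f' := fun y => 1 - Real.exp (-(b * y)))
    (fun y _ => (hasDerivAt_id y).sub (expderiv b hb.ne' y))
    (hcont.intervalIntegrable 0 x)
  rw [this]
  field_simp
  simp only [mul_zero, neg_zero, Real.exp_zero]
  ring

lemma ite_indicator_eq {G : ℝ → ℝ} (y : ℝ) :
    (fun z => (Ioi y).indicator G z) = fun z => if y < z then G z else 0 := by
  funext z
  simp [Set.indicator_apply, mem_Ioi]

lemma meas_int_Ioi {G : ℝ → ℝ} (hG : Measurable G) :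
    StronglyMeasurable fun y : ℝ => ∫ z in Ioi y, G z := by
  have key : ∀ y : ℝ, (∫ z in Ioi y, G z) = ∫ z, (fun q : ℝ × ℝ =>
      if q.1 < q.2 then G q.2 else 0) (y, z) := by
    intro y
    rw [← integral_indicator measurableSet_Ioi, ite_indicator_eq]
  simp_rw [key]
  exact StronglyMeasurable.integral_prod_right
    ((Measurable.ite (measurableSet_lt measurable_fst measurable_snd)
      (hG.comp measurable_snd) measurable_const).stronglyMeasurable)

lemma meas_int_Ioc {G : ℝ → ℝ} (hG : Measurable G) :
    StronglyMeasurable fun y : ℝ => ∫ z in Ioc 0 y, G z := by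
  have key : ∀ y : ℝ, (∫ z in Ioc 0 y, G z) = ∫ z, (fun q : ℝ × ℝ =>
      if 0 < q.2 ∧ q.2 ≤ q.1 then G q.2 else 0) (y, z) := by
    intro y
    rw [← integral_indicator measurableSet_Ioc]
    congr 1; funext z
    simp [Set.indicator_apply, mem_Ioc]
  simp_rw [key]
  exact StronglyMeasurable.integral_prod_right
    ((Measurable.ite ((measurableSet_lt measurable_const measurable_snd).inter
        (measurableSet_le measurable_snd measurable_fst))
      (hG.comp measurable_snd) measurable_const).stronglyMeasurable)

lemma fubini_min {g : ℝ → ℝ} (hg : Measurable g) (hg0 : ∀ z, 0 ≤ g z) {b : ℝ} (hb : 0 < b)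
    (hgb : ∀ z, 0 < z → g z ≤ Real.exp (-(b * z))) {x : ℝ} (hx : 0 < x) :
    ∫ y in Ioc (0 : ℝ) x, (∫ z in Ioi y, g z) = ∫ z in Ioi (0 : ℝ), min x z * g z := by
  have hWsm : StronglyMeasurable (fun q : ℝ × ℝ => if q.1 < q.2 then g q.2 else 0) :=
    (Measurable.ite (measurableSet_lt measurable_fst measurable_snd)
      (hg.comp measurable_snd) measurable_const).stronglyMeasurable
  have key : ∀ y : ℝ, (∫ z in Ioi y, g z) = ∫ z, (fun q : ℝ × ℝ =>
      if q.1 < q.2 then g q.2 else 0) (y, z) := by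
    intro y
    rw [← integral_indicator measurableSet_Ioi, ite_indicator_eq]
  have hexp : IntegrableOn (fun z : ℝ => Real.exp (-(b * z))) (Ioi 0) := by
    have := exp_neg_integrableOn_Ioi 0 hb
    refine this.congr_fun (fun z _ => by ring_nf) measurableSet_Ioi
  have hfin : IsFiniteMeasure (volume.restrict (Ioc (0:ℝ) x)) :=
    ⟨by rw [Measure.restrict_apply_univ]; exact measure_Ioc_lt_top⟩
  have hprodrw : (volume.restrict (Ioc (0:ℝ) x)).prod (volume : Measure ℝ)
      = ((volume : Measure ℝ).prod volume).restrict ((Ioc (0:ℝ) x) ×ˢ univ) := by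
    rw [← Measure.prod_restrict, Measure.restrict_univ]
  have hD : Integrable (fun q : ℝ × ℝ => (Ioi (0:ℝ)).indicator (fun z => Real.exp (-(b * z))) q.2)
      ((volume.restrict (Ioc (0:ℝ) x)).prod volume) := by
    have h1 : Integrable (fun _ : ℝ => (1:ℝ)) (volume.restrict (Ioc (0:ℝ) x)) :=
      integrable_const 1
    have h2 : Integrable ((Ioi (0:ℝ)).indicator fun z => Real.exp (-(b * z))) volume := by
      rw [integrable_indicator_iff measurableSet_Ioi]; exact hexp
    have := h1.mul_prod h2
    simpa using this
  have hWint : Integrable (fun q : ℝ × ℝ => if q.1 < q.2 then g q.2 else 0)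
      ((volume.restrict (Ioc (0:ℝ) x)).prod volume) := by
    refine hD.mono' (hWsm.aestronglyMeasurable) ?_
    rw [hprodrw]
    filter_upwards [ae_restrict_mem (measurableSet_Ioc.prod MeasurableSet.univ)] with q hq
    obtain ⟨hq1, -⟩ := hq
    simp only [indicator_apply, mem_Ioi]
    split_ifs with h1 h2
    · rw [norm_of_nonneg (hg0 _)]; exact hgb _ h2
    · exact absurd (hq1.1.trans h1) h2
    all_goals simp only [norm_zero]
    all_goals positivity
  have swap := integral_integral_swap (f := fun y z =>
      (fun q : ℝ × ℝ => if q.1 < q.2 then g q.2 else 0) (y, z)) hWint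
  calc ∫ y in Ioc (0:ℝ) x, (∫ z in Ioi y, g z)
      = ∫ y in Ioc (0:ℝ) x, ∫ z, (fun q : ℝ × ℝ => if q.1 < q.2 then g q.2 else 0) (y, z) := by
        simp_rw [key]
    _ = ∫ z, ∫ y in Ioc (0:ℝ) x, (fun q : ℝ × ℝ => if q.1 < q.2 then g q.2 else 0) (y, z) := swap
    _ = ∫ z, (Ioi (0:ℝ)).indicator (fun z => min x z * g z) z := by
        refine integral_congr_ae (Eventually.of_forall fun z => ?_)
        have hWz : (fun y : ℝ => (fun q : ℝ × ℝ => if q.1 < q.2 then g q.2 else 0) (y, z))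
            = fun y => (Iio z).indicator (fun _ => g z) y := by
          funext y
          simp [Set.indicator_apply, mem_Iio]
        simp only []
        rw [hWz]
        rw [integral_indicator measurableSet_Iio, Measure.restrict_restrict measurableSet_Iio,
          setIntegral_const]
        rcases le_or_gt z 0 with hz | hz
        · have hempty : Iio z ∩ Ioc 0 x = ∅ := by
            ext y
            simp only [mem_inter_iff, mem_Iio, mem_Ioc, mem_empty_iff_false, iff_false]
            rintro ⟨h1, h2, h3⟩; linarith
          rw [hempty, indicator_of_notMem (by simpa using hz)]
          simp
        · rw [indicator_of_mem (mem_Ioi.mpr hz)]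
          rcases le_or_gt z x with hzx | hxz
          · have he : Iio z ∩ Ioc 0 x = Ioo 0 z := by
              ext y
              simp only [mem_inter_iff, mem_Iio, mem_Ioc, mem_Ioo]
              exact ⟨fun ⟨h1, h2, h3⟩ => ⟨h2, h1⟩, fun ⟨h1, h2⟩ => ⟨h2, h1, h2.le.trans hzx⟩⟩
            rw [he, Real.volume_real_Ioo_of_le (by linarith), smul_eq_mul,
              min_eq_right hzx, sub_zero]
          · have he : Iio z ∩ Ioc 0 x = Ioc 0 x := by
              refine inter_eq_right.mpr fun y hy => ?_
              exact lt_of_le_of_lt hy.2 hxz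
            rw [he, Real.volume_real_Ioc_of_le (by linarith), smul_eq_mul,
              min_eq_left hxz.le, sub_zero]
    _ = ∫ z in Ioi (0:ℝ), min x z * g z := integral_indicator measurableSet_Ioi

section main
variable (p : ℝ) (hp : 0 < p) (hp1 : p < 1) (f : ℝ → ℝ) (hf : Measurable f)
  (hf01 : ∀ x, 0 ≤ x → f x ∈ Icc (0 : ℝ) 1)

lemma Hmeas (k : ℕ) : Measurable fun z : ℝ => Real.exp (-z) * z ^ k / (k ! : ℝ) :=
  ((measurable_id.neg.exp.mul (measurable_id.pow_const k)).div_const _)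

include hf in
lemma Gmeas (k : ℕ) :
    Measurable fun z : ℝ => Real.exp (-z) * z ^ k / (k ! : ℝ) * f z ^ k :=
  (Hmeas k).mul (hf.pow_const k)

include hf01 in
lemma Gbound {k : ℕ} {z : ℝ} (hz : 0 ≤ z) :
    ‖Real.exp (-z) * z ^ k / (k ! : ℝ) * f z ^ k‖
      ≤ Real.exp (-z) * z ^ k / (k ! : ℝ) := by
  obtain ⟨h0, h1⟩ := hf01 z hz
  have hH : 0 ≤ Real.exp (-z) * z ^ k / (k ! : ℝ) := by positivity
  rw [norm_mul, norm_of_nonneg hH, norm_of_nonneg (pow_nonneg h0 k)]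
  nth_rewrite 2 [← mul_one (Real.exp (-z) * z ^ k / (k ! : ℝ))]
  exact mul_le_mul_of_nonneg_left (pow_le_one₀ h0 h1) hH

include hp hp1 in
lemma cknn (k : ℕ) : 0 ≤ p * (1 - p) ^ k :=
  mul_nonneg hp.le (pow_nonneg (by linarith) k)

include hf hf01 in
lemma lintG (k : ℕ) {c : ℝ} (hc : 0 ≤ c) {y : ℝ} (hy : 0 ≤ y) :
    ∫⁻ z in Ioi y, ‖c * (Real.exp (-z) * z ^ k / (k ! : ℝ) * f z ^ k)‖₊ ≤
      ENNReal.ofReal c := by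
  have hIoi : Ioi y ⊆ Ioi (0:ℝ) := Ioi_subset_Ioi hy
  have hBint : IntegrableOn (fun z : ℝ => c * (Real.exp (-z) * z ^ k / (k ! : ℝ))) (Ioi y) :=
    (((H_integrable k).mono_set hIoi).const_mul c)
  refine le_trans (lint_le ?_ hBint) ?_
  · filter_upwards [ae_restrict_mem measurableSet_Ioi] with z hz
    rw [norm_mul, norm_of_nonneg hc]
    exact mul_le_mul_of_nonneg_left (Gbound f hf01 (le_of_lt (hIoi hz))) hc
  · refine ENNReal.ofReal_le_ofReal ?_
    rw [integral_const_mul]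
    nth_rewrite 2 [show c = c * 1 by ring]
    refine mul_le_mul_of_nonneg_left ?_ hc
    rw [← H_integral k]
    refine setIntegral_mono_set (H_integrable k) ?_ (HasSubset.Subset.eventuallyLE hIoi)
    filter_upwards [ae_restrict_mem measurableSet_Ioi] with z hz
    have : (0:ℝ) < z := hz
    positivity

lemma lintH (k : ℕ) {c : ℝ} (hc : 0 ≤ c) (y : ℝ) :
    ∫⁻ z in Ioc (0:ℝ) y, ‖c * (Real.exp (-z) * z ^ k / (k ! : ℝ))‖₊ ≤
      ENNReal.ofReal c := by
  have hsub : Ioc (0:ℝ) y ⊆ Ioi (0:ℝ) := fun z hz => hz.1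
  have hBint : IntegrableOn (fun z : ℝ => c * (Real.exp (-z) * z ^ k / (k ! : ℝ))) (Ioc 0 y) :=
    (((H_integrable k).mono_set hsub).const_mul c)
  refine le_trans (lint_le ?_ hBint) ?_
  · filter_upwards [ae_restrict_mem measurableSet_Ioc] with z hz
    rw [norm_mul, norm_of_nonneg hc]
    refine mul_le_mul_of_nonneg_left (le_of_eq (norm_of_nonneg ?_)) hc
    have : (0:ℝ) < z := hz.1
    positivity
  · refine ENNReal.ofReal_le_ofReal ?_
    rw [integral_const_mul]
    nth_rewrite 2 [show c = c * 1 by ring]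
    refine mul_le_mul_of_nonneg_left ?_ hc
    rw [← H_integral k]
    refine setIntegral_mono_set (H_integrable k) ?_ (HasSubset.Subset.eventuallyLE hsub)
    filter_upwards [ae_restrict_mem measurableSet_Ioi] with z hz
    have : (0:ℝ) < z := hz
    positivity

include hp hp1 in
lemma sumC : Summable fun k : ℕ => p * (1 - p) ^ k :=
  (summable_geometric_of_lt_one (by linarith) (by linarith)).mul_left p

include hp hp1 hf hf01 in
lemma sumG (y : ℝ) (hy : 0 ≤ y) :
    ∑' k : ℕ, (p * (1-p)^k) * ∫ z in Ioi y,
        Real.exp (-z) * z ^ k / (Nat.factorial k : ℝ) * f z ^ k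
      = p * ∫ z in Ioi y, Real.exp (-(z * (1 - (1 - p) * f z))) := by
  have h1 : ∀ k : ℕ, (p * (1-p)^k) * ∫ z in Ioi y,
        Real.exp (-z) * z ^ k / (Nat.factorial k : ℝ) * f z ^ k
      = ∫ z in Ioi y,
        p * (1-p)^k * (Real.exp (-z) * z ^ k / (Nat.factorial k : ℝ) * f z ^ k) := by
    intro k; rw [integral_const_mul]
  rw [tsum_congr h1, my_tsum_integral (C := fun k => p * (1-p)^k)
      (fun k => ((Gmeas f hf k).const_mul _).aestronglyMeasurable)
      (fun k => lintG f hf hf01 k (cknn p hp hp1 k) hy)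
      (sumC p hp hp1) (cknn p hp hp1)]
  rw [← integral_const_mul]
  refine integral_congr_ae (Eventually.of_forall fun z => ?_)
  exact ptwB p (1-p) (f z) z

include hp hp1 in
lemma sumH (y : ℝ) (hy : 0 ≤ y) :
    ∑' k : ℕ, (p * (1-p)^k) * ∫ z in Ioc (0:ℝ) y,
        Real.exp (-z) * z ^ k / (Nat.factorial k : ℝ)
      = 1 - Real.exp (-(p * y)) := by
  have h1 : ∀ k : ℕ, (p * (1-p)^k) * ∫ z in Ioc (0:ℝ) y,
        Real.exp (-z) * z ^ k / (Nat.factorial k : ℝ)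
      = ∫ z in Ioc (0:ℝ) y,
        p * (1-p)^k * (Real.exp (-z) * z ^ k / (Nat.factorial k : ℝ)) := by
    intro k; rw [integral_const_mul]
  rw [tsum_congr h1, my_tsum_integral (C := fun k => p * (1-p)^k)
      (fun k => ((Hmeas k).const_mul _).aestronglyMeasurable)
      (fun k => lintH k (cknn p hp hp1 k) y)
      (sumC p hp hp1) (cknn p hp hp1)]
  have hpt : ∀ z : ℝ, (∑' k : ℕ, p * (1-p)^k * (Real.exp (-z) * z ^ k / (k ! : ℝ)))
      = p * Real.exp (-(p * z)) := by
    intro z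
    have h := ptwA p (1-p) z
    rw [show -(z * (1 - (1-p))) = -(p * z) by ring] at h
    exact h
  rw [integral_congr_ae (Eventually.of_forall hpt)]
  exact int_exp_Ioc p y hp hy

lemma I1mem (k : ℕ) (y : ℝ) :
    (∫ z in Ioc (0:ℝ) y, Real.exp (-z) * z ^ k / (k ! : ℝ)) ∈ Icc (0:ℝ) 1 := by
  constructor
  · refine setIntegral_nonneg measurableSet_Ioc fun z hz => ?_
    have : (0:ℝ) < z := hz.1
    positivity
  · rw [← H_integral k]
    refine setIntegral_mono_set (H_integrable k) ?_
      (HasSubset.Subset.eventuallyLE fun z hz => hz.1)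
    filter_upwards [ae_restrict_mem measurableSet_Ioi] with z hz
    have : (0:ℝ) < z := hz
    positivity

include hf hf01 in
lemma Gint (k : ℕ) {y : ℝ} (hy : 0 ≤ y) :
    IntegrableOn (fun z => Real.exp (-z) * z ^ k / (k ! : ℝ) * f z ^ k) (Ioi y) := by
  refine Integrable.mono' ((H_integrable k).mono_set (Ioi_subset_Ioi hy))
    ((Gmeas f hf k).aestronglyMeasurable) ?_
  filter_upwards [ae_restrict_mem measurableSet_Ioi] with z hz
  exact Gbound f hf01 (hy.trans (le_of_lt hz))

include hf hf01 in
lemma I2mem (k : ℕ) {y : ℝ} (hy : 0 ≤ y) :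
    (∫ z in Ioi y, Real.exp (-z) * z ^ k / (k ! : ℝ) * f z ^ k) ∈ Icc (0:ℝ) 1 := by
  constructor
  · refine setIntegral_nonneg measurableSet_Ioi fun z hz => ?_
    have hz0 : (0:ℝ) ≤ z := hy.trans (le_of_lt hz)
    have h0 := (hf01 z hz0).1
    positivity
  · calc (∫ z in Ioi y, Real.exp (-z) * z ^ k / (k ! : ℝ) * f z ^ k)
        ≤ ∫ z in Ioi y, Real.exp (-z) * z ^ k / (k ! : ℝ) := by
          refine setIntegral_mono_on (Gint f hf hf01 k hy)
            ((H_integrable k).mono_set (Ioi_subset_Ioi hy)) measurableSet_Ioi fun z hz => ?_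
          have h := Gbound f hf01 (k := k) (z := z) (hy.trans (le_of_lt hz))
          exact le_trans (le_abs_self _) (Real.norm_eq_abs _ ▸ h)
      _ ≤ 1 := by
          rw [← H_integral k]
          refine setIntegral_mono_set (H_integrable k) ?_
            (HasSubset.Subset.eventuallyLE (Ioi_subset_Ioi hy))
          filter_upwards [ae_restrict_mem measurableSet_Ioi] with z hz
          have : (0:ℝ) < z := hz
          positivity

include hp hp1 hf hf01 in
lemma stepA {y : ℝ} (hy : 0 < y) :
    ∑' k : ℕ, (p * (1-p)^k) *
        ((∫ z in Ioc (0:ℝ) y, Real.exp (-z) * z ^ k / (Nat.factorial k : ℝ)) +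
          ∫ z in Ioi y, Real.exp (-z) * z ^ k / (Nat.factorial k : ℝ) * f z ^ k)
      = (1 - Real.exp (-(p * y))) +
          p * ∫ z in Ioi y, Real.exp (-(z * (1 - (1 - p) * f z))) := by
  have hs1 : Summable fun k : ℕ => (p * (1-p)^k) *
      ∫ z in Ioc (0:ℝ) y, Real.exp (-z) * z ^ k / (Nat.factorial k : ℝ) :=
    Summable.of_nonneg_of_le
      (fun k => mul_nonneg (cknn p hp hp1 k) (I1mem k y).1)
      (fun k => mul_le_of_le_one_right (cknn p hp hp1 k) (I1mem k y).2)
      (sumC p hp hp1)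
  have hs2 : Summable fun k : ℕ => (p * (1-p)^k) *
      ∫ z in Ioi y, Real.exp (-z) * z ^ k / (Nat.factorial k : ℝ) * f z ^ k :=
    Summable.of_nonneg_of_le
      (fun k => mul_nonneg (cknn p hp hp1 k) (I2mem f hf hf01 k hy.le).1)
      (fun k => mul_le_of_le_one_right (cknn p hp hp1 k) (I2mem f hf hf01 k hy.le).2)
      (sumC p hp hp1)
  rw [tsum_congr (fun k => mul_add (p * (1-p)^k) _ _), hs1.tsum_add hs2,
    sumH p hp hp1 y hy.le, sumG p hp hp1 f hf hf01 y hy.le]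

include hp hp1 hf hf01 in
lemma stepB {x : ℝ} (hx : 0 < x) :
    ∑' k : ℕ, (p * (1-p)^k) * ∫ y in Ioc (0:ℝ) x,
        ((∫ z in Ioc (0:ℝ) y, Real.exp (-z) * z ^ k / (Nat.factorial k : ℝ)) +
          ∫ z in Ioi y, Real.exp (-z) * z ^ k / (Nat.factorial k : ℝ) * f z ^ k)
      = ∫ y in Ioc (0:ℝ) x, ∑' k : ℕ, (p * (1-p)^k) *
          ((∫ z in Ioc (0:ℝ) y, Real.exp (-z) * z ^ k / (Nat.factorial k : ℝ)) +
            ∫ z in Ioi y, Real.exp (-z) * z ^ k / (Nat.factorial k : ℝ) * f z ^ k) := by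
  have hfin : IsFiniteMeasure (volume.restrict (Ioc (0:ℝ) x)) :=
    ⟨by rw [Measure.restrict_apply_univ]; exact measure_Ioc_lt_top⟩
  rw [tsum_congr (fun k : ℕ => (integral_const_mul (p * (1-p)^k) _).symm)]
  refine my_tsum_integral (C := fun k => x * (p * (1-p)^k * 2)) ?_ ?_ ?_ ?_
  · intro k
    exact (stronglyMeasurable_const.mul ((meas_int_Ioc (Hmeas k)).add
      (meas_int_Ioi (Gmeas f hf k)))).aestronglyMeasurable
  · intro k
    refine le_trans (lint_le (B := fun _ => (p * (1-p)^k) * 2) ?_ (integrable_const _)) ?_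
    · filter_upwards [ae_restrict_mem measurableSet_Ioc] with y hy
      rw [norm_mul, norm_of_nonneg (cknn p hp hp1 k)]
      have h1 := I1mem k y
      have h2 := I2mem f hf hf01 k hy.1.le
      have hn : ‖(∫ z in Ioc (0:ℝ) y, Real.exp (-z) * z ^ k / (Nat.factorial k : ℝ)) +
          ∫ z in Ioi y, Real.exp (-z) * z ^ k / (Nat.factorial k : ℝ) * f z ^ k‖ ≤ 2 := by
        rw [norm_of_nonneg (add_nonneg h1.1 h2.1)]
        linarith [h1.2, h2.2]
      exact mul_le_mul_of_nonneg_left hn (cknn p hp hp1 k)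
    · refine ENNReal.ofReal_le_ofReal (le_of_eq ?_)
      rw [integral_const, measureReal_restrict_apply_univ, Real.volume_real_Ioc_of_le hx.le,
        smul_eq_mul, sub_zero]
  · exact ((sumC p hp hp1).mul_right 2).mul_left x
  · intro k
    exact mul_nonneg hx.le (mul_nonneg (cknn p hp hp1 k) (by norm_num))

end main

noncomputable def Toper (P : ℕ → ℝ) (f : ℝ → ℝ) : ℝ → ℝ := fun x =>
  if x = 0 then
    ∑' k : ℕ, P (k + 1) * ∫ z in Ioi (0 : ℝ),
      Real.exp (-z) * z ^ k / (Nat.factorial k : ℝ) * f z ^ k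
  else
    (1 / x) * ∑' k : ℕ, P (k + 1) *
      ∫ y in Ioc (0 : ℝ) x,
        ((∫ z in Ioc (0 : ℝ) y, Real.exp (-z) * z ^ k / (Nat.factorial k : ℝ)) +
          ∫ z in Ioi y, Real.exp (-z) * z ^ k / (Nat.factorial k : ℝ) * f z ^ k)

theorem stmt_18 (p : ℝ) (hp : 0 < p) (hp1 : p < 1)
    (P : ℕ → ℝ) (hP : ∀ k : ℕ, 1 ≤ k → P k = p * (1 - p) ^ (k - 1)) (hP0 : P 0 = 0)
    (f : ℝ → ℝ) (hf : Measurable f) (hf01 : ∀ x, 0 ≤ x → f x ∈ Icc (0 : ℝ) 1) :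
    (∀ x : ℝ, 0 < x →
      Toper P f x =
        (p * x - 1 + Real.exp (-(p * x))) / (p * x) +
          (p / x) * ∫ z in Ioi (0 : ℝ),
            min x z * Real.exp (-(z * (1 - (1 - p) * f z)))) ∧
    Toper P f 0 = p * ∫ z in Ioi (0 : ℝ), Real.exp (-(z * (1 - (1 - p) * f z))) := by
  have hc : ∀ k : ℕ, P (k + 1) = p * (1 - p) ^ k := fun k => by
    have := hP (k + 1) (Nat.le_add_left 1 k)
    simpa using this
  have gmeas : Measurable fun z : ℝ => Real.exp (-(z * (1 - (1 - p) * f z))) :=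
    (Measurable.neg (measurable_id.mul (measurable_const.sub (hf.const_mul (1 - p))))).exp
  have g0 : ∀ z : ℝ, 0 ≤ Real.exp (-(z * (1 - (1 - p) * f z))) := fun z => (Real.exp_pos _).le
  have gbound : ∀ z : ℝ, 0 < z →
      Real.exp (-(z * (1 - (1 - p) * f z))) ≤ Real.exp (-(p * z)) := by
    intro z hz
    refine Real.exp_le_exp.mpr ?_
    have h1 := (hf01 z hz.le).1
    have h2 := (hf01 z hz.le).2
    nlinarith [mul_nonneg (mul_nonneg hz.le (by linarith : (0:ℝ) ≤ 1 - p))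
      (by linarith : (0:ℝ) ≤ 1 - f z)]
  have gint0 : IntegrableOn (fun z : ℝ => Real.exp (-(z * (1 - (1 - p) * f z)))) (Ioi 0) := by
    have hexp : IntegrableOn (fun z : ℝ => Real.exp (-(p * z))) (Ioi 0) := by
      have := exp_neg_integrableOn_Ioi 0 hp
      refine this.congr_fun (fun z _ => by ring_nf) measurableSet_Ioi
    refine Integrable.mono' hexp gmeas.aestronglyMeasurable ?_
    filter_upwards [ae_restrict_mem measurableSet_Ioi] with z hz
    rw [norm_of_nonneg (g0 z)]
    exact gbound z hz
  constructor
  · intro x hx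
    have hfin : IsFiniteMeasure (volume.restrict (Ioc (0:ℝ) x)) :=
      ⟨by rw [Measure.restrict_apply_univ]; exact measure_Ioc_lt_top⟩
    have hint1 : IntegrableOn (fun y : ℝ => 1 - Real.exp (-(p * y))) (Ioc 0 x) := by
      have : Continuous fun y : ℝ => 1 - Real.exp (-(p * y)) := by continuity
      exact this.integrableOn_Ioc
    have hint2 : IntegrableOn
        (fun y : ℝ => ∫ z in Ioi y, Real.exp (-(z * (1 - (1 - p) * f z)))) (Ioc 0 x) := by
      refine Integrable.mono'
        (integrable_const (∫ z in Ioi (0:ℝ), Real.exp (-(z * (1 - (1 - p) * f z)))))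
        (meas_int_Ioi gmeas).aestronglyMeasurable ?_
      filter_upwards [ae_restrict_mem measurableSet_Ioc] with y hy
      rw [norm_of_nonneg (setIntegral_nonneg measurableSet_Ioi fun z _ => g0 z)]
      exact setIntegral_mono_set gint0 (Eventually.of_forall g0)
        (HasSubset.Subset.eventuallyLE (Ioi_subset_Ioi hy.1.le))
    rw [Toper]
    simp only [if_neg hx.ne']
    rw [tsum_congr (fun k : ℕ => by rw [hc k]), stepB p hp hp1 f hf hf01 hx,
      setIntegral_congr_fun measurableSet_Ioc
        (fun y hy => stepA p hp hp1 f hf hf01 hy.1),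
      integral_add hint1 (hint2.const_mul p), int_one_sub_exp p x hp hx.le,
      integral_const_mul, fubini_min gmeas g0 hp gbound hx]
    field_simp
    ring
  · rw [Toper]
    simp only [if_pos rfl]
    rw [tsum_congr (fun k : ℕ => by rw [hc k])]
    exact sumG p hp hp1 f hf hf01 0 le_rfl
end
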